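/- arXiv:0908.1630 — 4 statements merged into one kernel-verified Lean document; each statement's English description precedes it below -/
import Mathlib

section
/- For positive integers $n,k$ and a strictly increasing sequence $0 \le m_1 < m_2 < \cdots < m_k \le n+k-1$, the determinant $\det_{1\le i,j\le k}\big(q^{(m_j-i+1)(m_j-i)/2}\binom{n}{m_j-i+1}_q\big)$ equals $q^{\binom{k+1}{3}+\frac{1}{2}\sum_{i=1}^k m_i(m_i-2k+1)} \prod_{1\le i<j\le k}(q^{m_i}-q^{m_j}) \prod_{i=1}^k \frac{[n+k-i]_q!}{[m_i]_q!\,[n+k-m_i-1]_q!}$, where $[a]_q!=\prod_{i=1}^a(1-q^i)$, $\binom{a}{b}_q = [a]_q!/([b]_q![a-b]_q!)$ for $0\le b\le a$ and $\binom{a}{b}_q=0$ otherwise. -/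
open Finset

/-- The `q`-factorial `[a]_q! = ∏_{i=1}^a (1 - q^i)`. -/
noncomputable def qfact (q : ℝ) (a : ℕ) : ℝ := ∏ i ∈ Finset.Icc 1 a, (1 - q ^ i)

/-- The `q`-binomial coefficient, zero when `b < 0` or `b > a`. -/
noncomputable def qbinom (q : ℝ) (a : ℕ) (b : ℤ) : ℝ :=
  if 0 ≤ b ∧ b ≤ a then qfact q a / (qfact q b.toNat * qfact q (a - b.toNat)) else 0

open Polynomial Matrix

lemma qpow_ne_one {q : ℝ} (hq : 0 < q) (hq1 : q ≠ 1) {t : ℕ} (ht : t ≠ 0) : q ^ t ≠ 1 := by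
  rcases hq1.lt_or_gt with h | h
  · exact ne_of_lt (pow_lt_one₀ hq.le h ht)
  · exact ne_of_gt (one_lt_pow₀ h ht)

lemma one_sub_qpow_ne {q : ℝ} (hq : 0 < q) (hq1 : q ≠ 1) {t : ℕ} (ht : t ≠ 0) :
    (1:ℝ) - q ^ t ≠ 0 := by
  intro h
  exact qpow_ne_one hq hq1 ht (by linarith)

lemma qfact_ne_zero {q : ℝ} (hq : 0 < q) (hq1 : q ≠ 1) (a : ℕ) : qfact q a ≠ 0 := by
  refine Finset.prod_ne_zero_iff.2 fun t ht => ?_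
  exact one_sub_qpow_ne hq hq1 (by simp at ht; omega)

lemma qpow_inj {q : ℝ} (hq : 0 < q) (hq1 : q ≠ 1) : Function.Injective fun t : ℕ => q ^ t := by
  rcases hq1.lt_or_gt with h | h
  · exact (pow_right_strictAnti₀ hq h).injective
  · exact (pow_right_strictMono₀ h).injective

lemma qfact_split {q : ℝ} {a b : ℕ} (h : a ≤ b) :
    qfact q b = qfact q a * ∏ t ∈ Ioc a b, (1 - q ^ t) := by
  unfold qfact
  rw [show (Finset.Icc 1 b) = Finset.Ioc 0 b by rw [← Finset.Icc_add_one_left_eq_Ioc, zero_add],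
    show (Finset.Icc 1 a) = Finset.Ioc 0 a by rw [← Finset.Icc_add_one_left_eq_Ioc, zero_add],
    ← Finset.prod_Ioc_consecutive _ (Nat.zero_le a) h]

lemma qfact_div {q : ℝ} (hq : 0 < q) (hq1 : q ≠ 1) {a b : ℕ} (h : a ≤ b) :
    qfact q b / qfact q a = ∏ t ∈ Ioc a b, (1 - q ^ t) := by
  rw [qfact_split h, mul_div_cancel_left₀ _ (qfact_ne_zero hq hq1 a)]

lemma prodA {q : ℝ} (hq : 0 < q) (hq1 : q ≠ 1) {i a : ℕ} (h : i ≤ a) :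
    ∏ s ∈ range i, (q ^ a - q ^ s)
      = (-1)^i * q ^ (∑ s ∈ range i, s) * (qfact q a / qfact q (a - i)) := by
  have h1 : ∀ s ∈ range i, q^a - q^s = (-1) * q^s * (1 - q^(a-s)) := by
    intro s hs
    simp only [mem_range] at hs
    have : q ^ s * q ^ (a - s) = q ^ a := by rw [← pow_add]; congr 1; omega
    ring_nf
    nlinarith [this]
  rw [Finset.prod_congr rfl h1, Finset.prod_mul_distrib, Finset.prod_mul_distrib,
    Finset.prod_const, Finset.prod_pow_eq_pow_sum]
  have h2 : ∏ s ∈ range i, (1 - q^(a-s)) = ∏ t ∈ Ioc (a-i) a, (1 - q^t) := by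
    refine Finset.prod_nbij' (fun s => a - s) (fun t => a - t) ?_ ?_ ?_ ?_ ?_ <;>
      intros x hx <;> simp only [mem_range, mem_Ioc] at * <;> try omega
  rw [h2, qfact_div hq hq1 (by omega), Finset.card_range]

lemma prodB {q : ℝ} (hq : 0 < q) (hq1 : q ≠ 1) {i a n k : ℕ} (h : a ≤ n + i) (hik : i < k) :
    ∏ s ∈ Ioo i k, (q ^ a - q ^ (n + s))
      = q ^ (a * (k - i - 1)) * (qfact q (n + k - 1 - a) / qfact q (n + i - a)) := by
  have h1 : ∀ s ∈ Ioo i k, q^a - q^(n+s) = q^a * (1 - q^(n+s-a)) := by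
    intro s hs
    simp only [mem_Ioo] at hs
    have : q ^ a * q ^ (n + s - a) = q ^ (n + s) := by rw [← pow_add]; congr 1; omega
    nlinarith [this]
  rw [Finset.prod_congr rfl h1, Finset.prod_mul_distrib, Finset.prod_const, Nat.card_Ioo,
    ← pow_mul]
  have h2 : ∏ s ∈ Ioo i k, (1 - q^(n+s-a)) = ∏ t ∈ Ioc (n+i-a) (n+k-1-a), (1 - q^t) := by
    refine Finset.prod_nbij' (fun s => n + s - a) (fun t => t + a - n) ?_ ?_ ?_ ?_ ?_ <;>
      intros x hx <;> simp only [mem_Ioo, mem_Ioc] at * <;> try omega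
  rw [h2, qfact_div hq hq1 (by omega)]
open Finset Polynomial Matrix

noncomputable def Pev (q : ℝ) (n k : ℕ) (i : ℕ) (x : ℝ) : ℝ :=
  (∏ s ∈ range i, (x - q ^ s)) * ∏ s ∈ Ioo i k, (x - q ^ (n + s))

noncomputable def Pl (q : ℝ) (n k i : ℕ) : Polynomial ℝ :=
  (∏ s ∈ range i, (X - C (q ^ s))) * ∏ s ∈ Ioo i k, (X - C (q ^ (n + s)))

lemma Pl_eval (q : ℝ) (n k i : ℕ) (x : ℝ) : (Pl q n k i).eval x = Pev q n k i x := by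
  simp [Pl, Pev, Polynomial.eval_prod]

lemma Pl_natDegree (q : ℝ) (n k i : ℕ) (hik : i < k) : (Pl q n k i).natDegree = k - 1 := by
  unfold Pl
  rw [Polynomial.Monic.natDegree_mul (monic_prod_of_monic _ _ fun s _ => monic_X_sub_C _)
    (monic_prod_of_monic _ _ fun s _ => monic_X_sub_C _),
    Polynomial.natDegree_prod_of_monic _ _ (fun s _ => monic_X_sub_C _),
    Polynomial.natDegree_prod_of_monic _ _ (fun s _ => monic_X_sub_C _)]
  simp only [natDegree_X_sub_C, Finset.sum_const, Finset.card_range, Nat.card_Ioo, smul_eq_mul,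
    mul_one]
  omega

lemma det_Pev (q : ℝ) (n k : ℕ) (x : Fin k → ℝ) :
    Matrix.det (Matrix.of fun i j : Fin k => Pev q n k i (x j))
      = Matrix.det (Matrix.of fun i s : Fin k => (Pl q n k (i : ℕ)).coeff (s : ℕ))
        * ∏ i : Fin k, ∏ j ∈ Ioi i, (x j - x i) := by
  have hfac : (Matrix.of fun i j : Fin k => Pev q n k i (x j))
      = (Matrix.of fun i s : Fin k => (Pl q n k (i : ℕ)).coeff (s : ℕ))
        * (Matrix.vandermonde x)ᵀ := by
    ext i j
    rw [Matrix.mul_apply]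
    simp only [Matrix.of_apply, Matrix.transpose_apply, Matrix.vandermonde_apply]
    have hdeg : (Pl q n k (i : ℕ)).natDegree < k := by
      rw [Pl_natDegree q n k i i.isLt]; have := i.isLt; omega
    rw [← Pl_eval, Polynomial.eval_eq_sum_range' hdeg, ← Fin.sum_univ_eq_sum_range]
  rw [hfac, Matrix.det_mul, Matrix.det_transpose, Matrix.det_vandermonde]

lemma pairs_prod {k : ℕ} (f : Fin k → Fin k → ℝ) :
    ∏ p ∈ univ.filter (fun p : Fin k × Fin k => p.1 < p.2), f p.1 p.2
      = ∏ i : Fin k, ∏ j ∈ Ioi i, f i j := by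
  rw [Finset.prod_sigma']
  refine Finset.prod_nbij' (fun p => ⟨p.1, p.2⟩) (fun x => (x.1, x.2)) ?_ ?_ ?_ ?_ ?_ <;>
    intros a ha <;>
    simp_all [Finset.mem_sigma, Finset.mem_filter, Finset.mem_Ioi]

lemma pairs_prod' {k : ℕ} (f : Fin k → Fin k → ℝ) :
    ∏ p ∈ univ.filter (fun p : Fin k × Fin k => p.1 < p.2), f p.1 p.2
      = ∏ j : Fin k, ∏ i ∈ Iio j, f i j := by
  rw [Finset.prod_sigma']
  refine Finset.prod_nbij' (fun p => ⟨p.2, p.1⟩) (fun x => (x.2, x.1)) ?_ ?_ ?_ ?_ ?_ <;>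
    intros a ha <;>
    simp_all [Finset.mem_sigma, Finset.mem_filter, Finset.mem_Iio]

lemma det_coeff {q : ℝ} (hq : 0 < q) (hq1 : q ≠ 1) (n k : ℕ) :
    Matrix.det (Matrix.of fun i s : Fin k => (Pl q n k (i : ℕ)).coeff (s : ℕ))
      = ∏ i : Fin k, ∏ s ∈ Ioo (i : ℕ) k, (q ^ (i : ℕ) - q ^ (n + s)) := by
  have qpow_inj : Function.Injective fun t : ℕ => q ^ t := by
    rcases hq1.lt_or_gt with h | h
    · exact (pow_right_strictAnti₀ hq h).injective
    · exact (pow_right_strictMono₀ h).injective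
  have hdet := det_Pev q n k (fun j : Fin k => q ^ (j : ℕ))
  have htri : Matrix.det (Matrix.of fun i j : Fin k => Pev q n k i (q ^ (j : ℕ)))
      = ∏ i : Fin k, Pev q n k i (q ^ (i : ℕ)) := by
    apply Matrix.det_of_upperTriangular
    intro i j hji
    simp only [Matrix.of_apply, Pev]
    apply mul_eq_zero_of_left
    exact Finset.prod_eq_zero (Finset.mem_range.2 hji) (sub_self _)
  have hsplit : ∏ i : Fin k, Pev q n k i (q ^ (i : ℕ))
      = (∏ i : Fin k, ∏ s ∈ range (i : ℕ), (q ^ (i : ℕ) - q ^ s))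
        * ∏ i : Fin k, ∏ s ∈ Ioo (i : ℕ) k, (q ^ (i : ℕ) - q ^ (n + s)) := by
    rw [← Finset.prod_mul_distrib]
    exact Finset.prod_congr rfl fun i _ => rfl
  have hV : (∏ i : Fin k, ∏ s ∈ range (i : ℕ), (q ^ (i : ℕ) - q ^ s))
      = ∏ i : Fin k, ∏ j ∈ Ioi i, (q ^ (j : ℕ) - q ^ (i : ℕ)) := by
    rw [← pairs_prod (fun a b : Fin k => q ^ (b : ℕ) - q ^ (a : ℕ)),
      pairs_prod' (fun a b : Fin k => q ^ (b : ℕ) - q ^ (a : ℕ))]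
    refine Finset.prod_congr rfl fun i _ => ?_
    rw [← Nat.Iio_eq_range, ← Fin.map_valEmbedding_Iio, Finset.prod_map]
    rfl
  have hVne : (∏ i : Fin k, ∏ j ∈ Ioi i, (q ^ (j : ℕ) - q ^ (i : ℕ))) ≠ 0 := by
    refine Finset.prod_ne_zero_iff.2 fun i _ => Finset.prod_ne_zero_iff.2 fun j hj => ?_
    have : (j : ℕ) ≠ (i : ℕ) := by
      simp only [Finset.mem_Ioi] at hj
      exact fun h => absurd (Fin.val_injective h) (ne_of_gt hj)
    exact sub_ne_zero.2 fun h => this (qpow_inj h)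
  rw [htri, hsplit, hV] at hdet
  exact (mul_left_cancel₀ hVne (hdet.trans (mul_comm _ _))).symm

lemma entry_eq {q : ℝ} (hq : 0 < q) (hq1 : q ≠ 1) {n k : ℕ} (hn : 0 < n)
    {a i : ℕ} (hik : i < k) (hub : a ≤ n + k - 1) :
    q ^ (((a : ℤ) - i) * ((a : ℤ) - i - 1) / 2) * qbinom q n ((a : ℤ) - i)
      = (q ^ ((a : ℤ) * ((a : ℤ) - 2 * k + 1) / 2) / (qfact q a * qfact q (n + k - 1 - a)))
        * ((-1) ^ i * q ^ i * qfact q n * Pev q n k i (q ^ a)) := by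
  have hq0 : q ≠ 0 := ne_of_gt hq
  rcases lt_or_ge a i with hlt | hia
  · have h0 : qbinom q n ((a : ℤ) - i) = 0 := by
      unfold qbinom
      rw [if_neg (by omega : ¬(0 ≤ (a:ℤ) - i ∧ (a:ℤ) - i ≤ (n:ℤ)))]
    have hP : Pev q n k i (q ^ a) = 0 := by
      unfold Pev
      exact mul_eq_zero_of_left
        (Finset.prod_eq_zero (Finset.mem_range.2 hlt) (sub_self (q ^ a))) _
    rw [h0, hP]
    ring
  rcases lt_or_ge (n + i) a with hgt | han
  · have h0 : qbinom q n ((a : ℤ) - i) = 0 := by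
      unfold qbinom
      rw [if_neg (by omega : ¬(0 ≤ (a:ℤ) - i ∧ (a:ℤ) - i ≤ (n:ℤ)))]
    have hP : Pev q n k i (q ^ a) = 0 := by
      unfold Pev
      refine mul_eq_zero_of_right _
        (Finset.prod_eq_zero (i := a - n) (Finset.mem_Ioo.2 ⟨by omega, by omega⟩) ?_)
      rw [show n + (a - n) = a by omega, sub_self]
    rw [h0, hP]
    ring
  · -- main case : i ≤ a ≤ n + i
    have h1 : ((a : ℤ) - i).toNat = a - i := by omega
    unfold qbinom
    rw [if_pos ⟨by omega, by omega⟩, h1, show n - (a - i) = n + i - a by omega]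
    unfold Pev
    rw [prodA hq hq1 hia, prodB hq hq1 han hik]
    -- exponent bookkeeping
    have hS : (∑ s ∈ range i, s) * 2 = i * (i - 1) := Finset.sum_range_id_mul_two i
    have hS' : 2 * ((∑ s ∈ range i, s : ℕ) : ℤ) = (i : ℤ) * ((i : ℤ) - 1) := by
      rcases Nat.eq_zero_or_pos i with rfl | hi1
      · simp
      · calc 2 * ((∑ s ∈ range i, s : ℕ) : ℤ) = (((∑ s ∈ range i, s) * 2 : ℕ) : ℤ) := by
              push_cast; ring
          _ = ((i * (i - 1) : ℕ) : ℤ) := by rw [hS]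
          _ = (i : ℤ) * ((i : ℤ) - 1) := by
              rw [Nat.cast_mul, show ((i - 1 : ℕ) : ℤ) = (i : ℤ) - 1 by omega]
    have hC : ((a * (k - i - 1) : ℕ) : ℤ) = (a : ℤ) * ((k : ℤ) - i - 1) := by
      rw [Nat.cast_mul, show ((k - i - 1 : ℕ) : ℤ) = (k : ℤ) - i - 1 by omega]
    have hT : 2 * ((((a : ℤ) - i) * ((a : ℤ) - i - 1)) / 2)
        = ((a : ℤ) - i) * ((a : ℤ) - i - 1) := by
      refine Int.mul_ediv_cancel' ?_
      have h := Int.even_mul_succ_self ((a : ℤ) - i - 1)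
      have : Even (((a : ℤ) - i) * ((a : ℤ) - i - 1)) := by
        rw [show ((a:ℤ) - i) * ((a:ℤ) - i - 1) = ((a:ℤ) - i - 1) * (((a:ℤ) - i - 1) + 1) by ring]
        exact h
      exact this.two_dvd
    have hZ : 2 * (((a : ℤ) * ((a : ℤ) - 2 * k + 1)) / 2)
        = (a : ℤ) * ((a : ℤ) - 2 * k + 1) := by
      refine Int.mul_ediv_cancel' ?_
      have : Even ((a : ℤ) * ((a : ℤ) - 2 * k + 1)) := by
        rcases Int.even_or_odd (a : ℤ) with he | ⟨c, hc⟩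
        · exact he.mul_right _
        · refine (Int.even_mul).2 (Or.inr ⟨c + 1 - k, by omega⟩)
      exact this.two_dvd
    have hE : ((a : ℤ) - i) * ((a : ℤ) - i - 1) / 2
        = (a : ℤ) * ((a : ℤ) - 2 * k + 1) / 2 + (i : ℤ) + ((∑ s ∈ range i, s : ℕ) : ℤ)
          + ((a * (k - i - 1) : ℕ) : ℤ) := by
      have h2 : 2 * (((a : ℤ) - i) * ((a : ℤ) - i - 1) / 2)
          = 2 * ((a : ℤ) * ((a : ℤ) - 2 * k + 1) / 2 + (i : ℤ) + ((∑ s ∈ range i, s : ℕ) : ℤ)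
            + ((a * (k - i - 1) : ℕ) : ℤ)) := by
        rw [hT, mul_add, mul_add, mul_add, hZ, hS', hC]
        ring
      linarith
    rw [hE, zpow_add₀ hq0, zpow_add₀ hq0, zpow_add₀ hq0, zpow_natCast, zpow_natCast, zpow_natCast]
    have f1 := qfact_ne_zero hq hq1 a
    have f2 := qfact_ne_zero hq hq1 (n + k - 1 - a)
    have f3 := qfact_ne_zero hq hq1 (a - i)
    have f4 := qfact_ne_zero hq hq1 (n + i - a)
    have hm1 : (-1 : ℝ) ^ (i * 2) = 1 := Even.neg_one_pow ⟨i, by ring⟩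
    field_simp
    ring_nf
    rw [hm1, mul_one]

lemma zpow_sum₀ {ι : Type*} {q : ℝ} (hq : q ≠ 0) (s : Finset ι) (f : ι → ℤ) :
    q ^ (∑ i ∈ s, f i) = ∏ i ∈ s, q ^ f i := by
  classical
  induction s using Finset.induction with
  | empty => simp
  | insert a s h ih => rw [Finset.sum_insert h, Finset.prod_insert h, zpow_add₀ hq, ih]

lemma sum_range_id_eq (k : ℕ) : ∑ i ∈ range k, i = k.choose 2 := by
  have h1 := Finset.sum_range_id_mul_two k
  rw [Nat.choose_two_right, ← h1, Nat.mul_div_cancel _ two_pos]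

lemma sum_i_mul_k_sub_i (k : ℕ) : ∑ i ∈ range k, i * (k - i) = (k + 1).choose 3 := by
  induction k with
  | zero => decide
  | succ k ih =>
    have hstep : ∑ i ∈ range (k + 1), i * (k + 1 - i)
        = (∑ i ∈ range (k + 1), i * (k - i)) + ∑ i ∈ range (k + 1), i := by
      rw [← Finset.sum_add_distrib]
      refine Finset.sum_congr rfl fun i hi => ?_
      simp only [Finset.mem_range] at hi
      have h1 : k + 1 - i = (k - i) + 1 := by omega
      rw [h1, Nat.mul_add, mul_one]
    have hlast : ∑ i ∈ range (k + 1), i * (k - i) = ∑ i ∈ range k, i * (k - i) := by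
      rw [Finset.sum_range_succ, Nat.sub_self, Nat.mul_zero, Nat.add_zero]
    have h2 : (k + 1 + 1).choose 3 = (k + 1).choose 2 + (k + 1).choose 3 :=
      Nat.choose_succ_succ (k + 1) 2
    have h3 := sum_range_id_eq (k + 1)
    omega

lemma rowfact {q : ℝ} (hq : 0 < q) (hq1 : q ≠ 1) {n k i : ℕ} (hik : i < k) :
    q ^ i * qfact q n * ∏ s ∈ Ioo i k, (q ^ i - q ^ (n + s))
      = q ^ (i * (k - i)) * qfact q (n + k - 1 - i) := by
  rw [prodB hq hq1 (Nat.le_add_left i n) hik, show n + i - i = n by omega]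
  have hne := qfact_ne_zero hq hq1 n
  have hexp : i * (k - i) = i + i * (k - i - 1) := by
    have h1 : k - i = (k - i - 1) + 1 := by omega
    rw [h1, Nat.mul_add, mul_one, Nat.add_sub_cancel, Nat.add_comm]
  rw [hexp, pow_add]
  field_simp
/-- Multiplicative form of the `q`-weighted Gessel–Viennot determinant for the cut hexagon. -/
theorem qZ_product_form (n k : ℕ) (hn : 0 < n) (hk : 0 < k) (q : ℝ) (hq : 0 < q)
    (hq1 : q ≠ 1) (m : Fin k → ℕ) (hm : StrictMono m) (hub : ∀ i, m i ≤ n + k - 1) :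
    Matrix.det (Matrix.of fun i j : Fin k =>
        q ^ ((((m j : ℤ) - (i : ℤ)) * ((m j : ℤ) - (i : ℤ) - 1)) / 2)
          * qbinom q n ((m j : ℤ) - (i : ℤ)))
      = q ^ ((((k + 1).choose 3 : ℤ))
            + (∑ i : Fin k, (m i : ℤ) * ((m i : ℤ) - 2 * (k : ℤ) + 1)) / 2)
        * (∏ p ∈ Finset.univ.filter (fun p : Fin k × Fin k => p.1 < p.2),
            (q ^ (m p.1) - q ^ (m p.2)))
        * ∏ i : Fin k,
            qfact q (n + k - ((i : ℕ) + 1)) / (qfact q (m i) * qfact q (n + k - m i - 1)) := by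
  have hq0 : q ≠ 0 := ne_of_gt hq
  set y : Fin k → ℝ := fun j => q ^ (m j) with hy
  set Cc : Fin k → ℝ := fun j =>
    q ^ ((m j : ℤ) * ((m j : ℤ) - 2 * k + 1) / 2)
      / (qfact q (m j) * qfact q (n + k - 1 - m j)) with hCc
  set Dd : Fin k → ℝ := fun i => (-1) ^ (i : ℕ) * q ^ (i : ℕ) * qfact q n with hDd
  have hmat : (Matrix.of fun i j : Fin k =>
      q ^ ((((m j : ℤ) - (i : ℤ)) * ((m j : ℤ) - (i : ℤ) - 1)) / 2)
        * qbinom q n ((m j : ℤ) - (i : ℤ)))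
      = Matrix.of (fun i j : Fin k => Cc j *
          (Matrix.of (fun i j : Fin k => Dd i *
            (Matrix.of fun i j : Fin k => Pev q n k i (y j)) i j)) i j) := by
    ext i j
    simp only [Matrix.of_apply, hCc, hDd, hy]
    exact entry_eq hq hq1 hn i.isLt (hub j)
  have hDD : (∏ i : Fin k, Dd i)
      = (∏ i : Fin k, (-1 : ℝ) ^ (i : ℕ)) * ∏ i : Fin k, (q ^ (i : ℕ) * qfact q n) := by
    rw [← Finset.prod_mul_distrib]
    exact Finset.prod_congr rfl fun i _ => by rw [hDd]; ring
  have hrow : (∏ i : Fin k, (q ^ (i : ℕ) * qfact q n))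
        * (∏ i : Fin k, ∏ s ∈ Ioo (i : ℕ) k, (q ^ (i : ℕ) - q ^ (n + s)))
      = q ^ ((k + 1).choose 3) * ∏ i : Fin k, qfact q (n + k - 1 - (i : ℕ)) := by
    rw [← Finset.prod_mul_distrib,
      Finset.prod_congr rfl fun (i : Fin k) _ => rowfact hq hq1 i.isLt,
      Finset.prod_mul_distrib, Finset.prod_pow_eq_pow_sum,
      Fin.sum_univ_eq_sum_range (fun i => i * (k - i)) k, sum_i_mul_k_sub_i]
  have hsign : (∏ i : Fin k, (-1 : ℝ) ^ (i : ℕ)) * (∏ i : Fin k, ∏ j ∈ Ioi i, (y j - y i))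
      = ∏ p ∈ Finset.univ.filter (fun p : Fin k × Fin k => p.1 < p.2),
          (q ^ (m p.1) - q ^ (m p.2)) := by
    have h1 : ∀ i : Fin k, ∏ j ∈ Ioi i, (y j - y i)
        = (-1 : ℝ) ^ (k - 1 - (i : ℕ)) * ∏ j ∈ Ioi i, (y i - y j) := by
      intro i
      rw [Finset.prod_congr rfl (fun j _ => show y j - y i = (-1) * (y i - y j) by ring),
        Finset.prod_mul_distrib, Finset.prod_const, Fin.card_Ioi]
    rw [pairs_prod (fun a b : Fin k => q ^ (m a) - q ^ (m b)), ← Finset.prod_mul_distrib,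
      Finset.prod_congr rfl (fun (i : Fin k) _ => by
        rw [h1 i, ← mul_assoc, ← pow_add, show (i : ℕ) + (k - 1 - (i : ℕ)) = k - 1 by
          have := i.isLt; omega]),
      Finset.prod_mul_distrib, Finset.prod_const, Finset.card_univ, Fintype.card_fin,
      ← pow_mul]
    have heven : Even ((k - 1) * k) := by
      rcases Nat.even_or_odd k with he | ho
      · exact he.mul_left (k - 1)
      · exact (Nat.Odd.sub_odd ho odd_one).mul_right k
    rw [heven.neg_one_pow, one_mul]
  have hS12 : (∑ i : Fin k, (m i : ℤ) * ((m i : ℤ) - 2 * (k : ℤ) + 1)) / 2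
      = ∑ j : Fin k, ((m j : ℤ) * ((m j : ℤ) - 2 * k + 1) / 2) := by
    have heven : ∀ j : Fin k, 2 * ((m j : ℤ) * ((m j : ℤ) - 2 * k + 1) / 2)
        = (m j : ℤ) * ((m j : ℤ) - 2 * k + 1) := by
      intro j
      refine Int.mul_ediv_cancel' ?_
      have : Even ((m j : ℤ) * ((m j : ℤ) - 2 * k + 1)) := by
        rcases Int.even_or_odd (m j : ℤ) with he | ⟨c, hc⟩
        · exact he.mul_right _
        · exact (Int.even_mul).2 (Or.inr ⟨c + 1 - k, by omega⟩)
      exact this.two_dvd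
    have h2 : (∑ i : Fin k, (m i : ℤ) * ((m i : ℤ) - 2 * (k : ℤ) + 1))
        = (∑ j : Fin k, ((m j : ℤ) * ((m j : ℤ) - 2 * k + 1) / 2)) * 2 := by
      rw [Finset.sum_mul]
      exact Finset.sum_congr rfl fun j _ => by rw [mul_comm _ 2, heven j]
    rw [Int.ediv_eq_of_eq_mul_left two_ne_zero h2]
  have hCc2 : (∏ j : Fin k, Cc j)
      = q ^ (∑ j : Fin k, ((m j : ℤ) * ((m j : ℤ) - 2 * k + 1) / 2))
        / ∏ j : Fin k, (qfact q (m j) * qfact q (n + k - 1 - m j)) := by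
    rw [hCc, Finset.prod_div_distrib, zpow_sum₀ hq0]
  have htar : (∏ i : Fin k,
        qfact q (n + k - ((i : ℕ) + 1)) / (qfact q (m i) * qfact q (n + k - m i - 1)))
      = (∏ i : Fin k, qfact q (n + k - 1 - (i : ℕ)))
        / ∏ j : Fin k, (qfact q (m j) * qfact q (n + k - 1 - m j)) := by
    rw [Finset.prod_div_distrib]
    congr 1
    · exact Finset.prod_congr rfl fun i _ =>
        by rw [show n + k - ((i : ℕ) + 1) = n + k - 1 - (i : ℕ) by omega]
    · exact Finset.prod_congr rfl fun i _ =>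
        by rw [show n + k - m i - 1 = n + k - 1 - m i by omega]
  have hqexp : q ^ ((((k + 1).choose 3 : ℤ))
        + (∑ i : Fin k, (m i : ℤ) * ((m i : ℤ) - 2 * (k : ℤ) + 1)) / 2)
      = q ^ ((k + 1).choose 3)
        * q ^ (∑ j : Fin k, ((m j : ℤ) * ((m j : ℤ) - 2 * k + 1) / 2)) := by
    rw [hS12, zpow_add₀ hq0, zpow_natCast]
  have hGne : (∏ j : Fin k, (qfact q (m j) * qfact q (n + k - 1 - m j))) ≠ 0 :=
    Finset.prod_ne_zero_iff.2 fun j _ =>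
      mul_ne_zero (qfact_ne_zero hq hq1 _) (qfact_ne_zero hq hq1 _)
  calc Matrix.det (Matrix.of fun i j : Fin k =>
        q ^ ((((m j : ℤ) - (i : ℤ)) * ((m j : ℤ) - (i : ℤ) - 1)) / 2)
          * qbinom q n ((m j : ℤ) - (i : ℤ)))
      = (∏ j : Fin k, Cc j) * ((∏ i : Fin k, Dd i)
          * ((∏ i : Fin k, ∏ s ∈ Ioo (i : ℕ) k, (q ^ (i : ℕ) - q ^ (n + s)))
            * ∏ i : Fin k, ∏ j ∈ Ioi i, (y j - y i))) := by
        rw [hmat, Matrix.det_mul_row, Matrix.det_mul_column, det_Pev, det_coeff hq hq1]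
    _ = (∏ j : Fin k, Cc j)
          * (((∏ i : Fin k, (q ^ (i : ℕ) * qfact q n))
              * (∏ i : Fin k, ∏ s ∈ Ioo (i : ℕ) k, (q ^ (i : ℕ) - q ^ (n + s))))
            * ((∏ i : Fin k, (-1 : ℝ) ^ (i : ℕ))
              * ∏ i : Fin k, ∏ j ∈ Ioi i, (y j - y i))) := by
        rw [hDD]; ring
    _ = (∏ j : Fin k, Cc j)
          * ((q ^ ((k + 1).choose 3) * ∏ i : Fin k, qfact q (n + k - 1 - (i : ℕ)))
            * ∏ p ∈ Finset.univ.filter (fun p : Fin k × Fin k => p.1 < p.2),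
                (q ^ (m p.1) - q ^ (m p.2))) := by
        rw [hrow, hsign]
    _ = q ^ ((((k + 1).choose 3 : ℤ))
            + (∑ i : Fin k, (m i : ℤ) * ((m i : ℤ) - 2 * (k : ℤ) + 1)) / 2)
        * (∏ p ∈ Finset.univ.filter (fun p : Fin k × Fin k => p.1 < p.2),
            (q ^ (m p.1) - q ^ (m p.2)))
        * ∏ i : Fin k,
            qfact q (n + k - ((i : ℕ) + 1)) / (qfact q (m i) * qfact q (n + k - m i - 1)) := by
        rw [hCc2, htar, hqexp]
        field_simp
end

section
/- For a strictly increasing sequence of integers $0\le m_1<\cdots<m_k\le n+k-1$, the determinant $\det_{1\le i,j\le k}\binom{n}{m_j-i+1}$ equals $\prod_{1\le i<j\le k}(m_j-m_i)\,\prod_{i=1}^k \frac{(n+k-i)!}{m_i!\,(n+k-m_i-1)!}$. -/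
open Finset

/-- Binomial coefficient `n choose b` with an integer lower index, zero when `b < 0`
(and, by the usual convention of `Nat.choose`, zero when `b > n`). -/
def intChoose (n : ℕ) (b : ℤ) : ℕ := if 0 ≤ b then n.choose b.toNat else 0


lemma intChoose_natsub (n M s : ℕ) :
    intChoose n ((M : ℤ) - (s : ℤ)) = if s ≤ M then n.choose (M - s) else 0 := by
  unfold intChoose
  rcases le_or_gt s M with h | h
  · rw [if_pos (by omega), if_pos h]
    congr 1
    omega
  · rw [if_neg (by omega), if_neg (by omega)]

lemma choose_sum_aux (n k i M : ℕ) (hik : i < k) :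
    (n + i).choose M
      = ∑ s ∈ Finset.range k, i.choose s * (if s ≤ M then n.choose (M - s) else 0) := by
  rw [Nat.add_comm n i, Nat.add_choose_eq, Finset.Nat.sum_antidiagonal_eq_sum_range_succ_mk]
  have h1 : ∑ s ∈ Finset.range (M + 1), i.choose s * n.choose (M - s)
      = ∑ s ∈ Finset.range (M + 1), i.choose s * (if s ≤ M then n.choose (M - s) else 0) := by
    refine Finset.sum_congr rfl fun s hs => ?_
    rw [Finset.mem_range] at hs
    rw [if_pos (by omega)]
  rw [h1]
  have e1 : ∑ s ∈ Finset.range (M + 1), i.choose s * (if s ≤ M then n.choose (M - s) else 0)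
      = ∑ s ∈ Finset.range (max (M + 1) k), i.choose s * (if s ≤ M then n.choose (M - s) else 0) := by
    refine Finset.sum_subset (Finset.range_subset_range.2 (le_max_left _ _)) fun x _ hx => ?_
    rw [Finset.mem_range] at hx
    rw [if_neg (by omega), Nat.mul_zero]
  have e2 : ∑ s ∈ Finset.range k, i.choose s * (if s ≤ M then n.choose (M - s) else 0)
      = ∑ s ∈ Finset.range (max (M + 1) k), i.choose s * (if s ≤ M then n.choose (M - s) else 0) := by
    refine Finset.sum_subset (Finset.range_subset_range.2 (le_max_right _ _)) fun x _ hx => ?_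
    rw [Finset.mem_range] at hx
    rw [Nat.choose_eq_zero_of_lt (by omega), Nat.zero_mul]
  rw [e1, e2]

lemma choose_factor (n k i M : ℕ) (hk : 0 < k) (hik : i < k) (hM : M ≤ n + k - 1) :
    (((n + i).choose M : ℕ) : ℝ)
      = ((n + i).factorial : ℝ)
        * (((M.factorial * (n + k - 1 - M).factorial : ℕ) : ℝ))⁻¹
        * ∏ t ∈ Finset.Ico (i + 1) k, ((n + t : ℝ) - (M : ℝ)) := by
  rcases le_or_gt M (n + i) with h | h
  · have key : (n + i).choose M * (M.factorial * (n + k - 1 - M).factorial)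
        = (n + i).factorial * ∏ t ∈ Finset.Ico (i + 1) k, (n + t - M) := by
      have h3 : ∏ t ∈ Finset.Ico (i + 1) k, (n + t - M)
          = ∏ s ∈ Finset.range (k - (i + 1)), (n + i - M + 1 + s) := by
        rw [Finset.prod_Ico_eq_prod_range]
        exact Finset.prod_congr rfl fun s _ => by omega
      have h2 : n + k - 1 - M = (n + i - M) + (k - 1 - i) := by omega
      have h4' : ∀ r : ℕ, (n + i - M + 1).ascFactorial r
          = ∏ s ∈ Finset.range r, (n + i - M + 1 + s) := by
        intro r
        induction r with
        | zero => simp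
        | succ r ih => rw [Nat.ascFactorial_succ, Finset.prod_range_succ, ih, Nat.mul_comm]
      have h4 : (n + i - M + 1).ascFactorial (k - 1 - i)
          = ∏ s ∈ Finset.range (k - (i + 1)), (n + i - M + 1 + s) := by
        rw [h4' (k - 1 - i), show k - 1 - i = k - (i + 1) from by omega]
      rw [h3, h2, ← h4, ← Nat.factorial_mul_ascFactorial,
        ← Nat.choose_mul_factorial_mul_factorial h]
      ring
    have hne : (((M.factorial * (n + k - 1 - M).factorial : ℕ) : ℝ)) ≠ 0 := by
      positivity
    have hprod : (((∏ t ∈ Finset.Ico (i + 1) k, (n + t - M) : ℕ) : ℝ))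
        = ∏ t ∈ Finset.Ico (i + 1) k, ((n + t : ℝ) - (M : ℝ)) := by
      rw [Nat.cast_prod]
      refine Finset.prod_congr rfl fun t ht => ?_
      rw [Finset.mem_Ico] at ht
      have : M ≤ n + t := by omega
      push_cast [Nat.cast_sub this]
      ring
    field_simp
    rw [← hprod, ← Nat.cast_mul, ← Nat.cast_mul, key, Nat.cast_mul]
  · rw [Nat.choose_eq_zero_of_lt h]
    have hmem : M - n ∈ Finset.Ico (i + 1) k := by
      rw [Finset.mem_Ico]; omega
    rw [Finset.prod_eq_zero hmem (by
      have : n + (M - n) = M := by omega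
      rw [show ((n : ℝ) + (M - n : ℕ)) = ((n + (M - n) : ℕ) : ℝ) by push_cast; ring, this]
      ring)]
    simp

lemma prod_pairs {k : ℕ} (f : Fin k → Fin k → ℝ) :
    ∏ p ∈ Finset.univ.filter (fun p : Fin k × Fin k => p.1 < p.2), f p.1 p.2
      = ∏ i : Fin k, ∏ j ∈ Finset.Ioi i, f i j := by
  rw [Finset.prod_filter, Fintype.prod_prod_type]
  refine Finset.prod_congr rfl fun i _ => ?_
  rw [← Finset.prod_filter]
  congr 1
  ext j
  simp

/-- Multiplicative form of the Lindström–Gessel–Viennot determinant counting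
nonintersecting lattice paths in the cut hexagon (uniform weights). -/
theorem LGV_product_form (n k : ℕ) (hn : 0 < n) (hk : 0 < k)
    (m : Fin k → ℕ) (hm : StrictMono m) (hub : ∀ i, m i ≤ n + k - 1) :
    Matrix.det (Matrix.of fun i j : Fin k => (intChoose n ((m j : ℤ) - (i : ℤ)) : ℝ))
      = (∏ p ∈ Finset.univ.filter (fun p : Fin k × Fin k => p.1 < p.2),
          ((m p.2 : ℝ) - (m p.1 : ℝ)))
        * ∏ i : Fin k,
            (Nat.factorial (n + k - ((i : ℕ) + 1)) : ℝ)
              / ((Nat.factorial (m i) : ℝ) * (Nat.factorial (n + k - m i - 1) : ℝ)) := by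
  classical
  set A : Matrix (Fin k) (Fin k) ℝ :=
    Matrix.of (fun i j : Fin k => (intChoose n ((m j : ℤ) - (i : ℤ)) : ℝ)) with hA
  set B : Matrix (Fin k) (Fin k) ℝ :=
    Matrix.of (fun i j : Fin k => (((n + (i : ℕ)).choose (m j) : ℕ) : ℝ)) with hBdef
  set L : Matrix (Fin k) (Fin k) ℝ :=
    Matrix.of (fun i s : Fin k => ((Nat.choose (i : ℕ) (s : ℕ) : ℕ) : ℝ)) with hLdef
  -- Step 1 : A and B have the same determinant
  have hLA : B = L * A := by
    ext i j
    rw [Matrix.mul_apply]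
    simp only [hBdef, hLdef, hA, Matrix.of_apply]
    rw [choose_sum_aux n k i (m j) i.isLt, Nat.cast_sum,
      ← Fin.sum_univ_eq_sum_range
        (fun s => (((i : ℕ).choose s * (if s ≤ m j then n.choose (m j - s) else 0) : ℕ) : ℝ)) k]
    refine Finset.sum_congr rfl fun s _ => ?_
    rw [intChoose_natsub, Nat.cast_mul]
  have hdetL : L.det = 1 := by
    rw [Matrix.det_of_lowerTriangular L (fun i j hij => by
      simp only [hLdef, Matrix.of_apply]
      have hij' : (i : ℕ) < (j : ℕ) := hij
      rw [Nat.choose_eq_zero_of_lt hij', Nat.cast_zero])]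
    simp [hLdef]
  have h1 : A.det = B.det := by rw [hLA, Matrix.det_mul, hdetL, one_mul]
  -- Step 2 : factor out row and column factors
  set r : Fin k → ℝ := fun i => ((n + (i : ℕ)).factorial : ℝ) with hr
  set c : Fin k → ℝ := fun j => (((m j).factorial * (n + k - 1 - m j).factorial : ℕ) : ℝ)⁻¹ with hc
  set G : Matrix (Fin k) (Fin k) ℝ :=
    Matrix.of (fun i j : Fin k => ∏ t ∈ Finset.Ico ((i : ℕ) + 1) k, ((n + t : ℝ) - (m j : ℝ)))
    with hGdef
  have hBG : B = Matrix.of (fun i j : Fin k =>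
      r i * ((Matrix.of fun i j : Fin k => c j * G i j) i j)) := by
    ext i j
    simp only [hBdef, Matrix.of_apply]
    rw [choose_factor n k i (m j) hk i.isLt (hub j)]
    simp only [hr, hc, hGdef, Matrix.of_apply]
    push_cast
    ring
  have h2 : B.det = (∏ i, r i) * ((∏ j, c j) * G.det) := by
    rw [hBG, Matrix.det_mul_column, Matrix.det_mul_row]
  -- Step 3 : the determinant of G is a Vandermonde determinant
  set w : Fin k → ℝ := fun i => (m (Fin.rev i) : ℝ) with hw
  set q : Fin k → Polynomial ℝ :=
    fun j => ∏ t ∈ Finset.Ico (k - (j : ℕ)) k, (Polynomial.X - Polynomial.C ((n + t : ℕ) : ℝ))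
    with hq
  have hmonic : ∀ j, (q j).Monic :=
    fun j => Polynomial.monic_prod_of_monic _ _ fun t _ => Polynomial.monic_X_sub_C _
  have hdeg : ∀ j : Fin k, (q j).natDegree = (j : ℕ) := by
    intro j
    rw [hq, Polynomial.natDegree_prod _ _ (fun t _ => (Polynomial.monic_X_sub_C _).ne_zero)]
    simp only [Polynomial.natDegree_X_sub_C]
    rw [Finset.sum_const, Nat.card_Ico, smul_eq_mul, Nat.mul_one]
    have := j.isLt
    omega
  set N : Matrix (Fin k) (Fin k) ℝ := Matrix.of (fun i j : Fin k => (q j).eval (w i)) with hN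
  have hdetN : N.det = ∏ i : Fin k, ∏ j ∈ Finset.Ioi i, (w j - w i) := by
    rw [← Matrix.det_eval_matrixOfPolynomials_eq_det_vandermonde w q hdeg hmonic,
      Matrix.det_vandermonde]
  set e : Fin k → ℝ := fun i => ∏ t ∈ Finset.Ico ((i : ℕ) + 1) k, (-1 : ℝ) with he
  have hGN : G = Matrix.of (fun i j : Fin k =>
      e i * ((N.transpose.submatrix Fin.rev Fin.rev) i j)) := by
    ext i j
    simp only [hGdef, Matrix.of_apply, Matrix.submatrix_apply, Matrix.transpose_apply, hN, he, hq,
      hw, Fin.rev_rev]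
    have hrev : k - ((Fin.rev i : Fin k) : ℕ) = (i : ℕ) + 1 := by
      rw [Fin.val_rev]
      have := i.isLt
      omega
    rw [hrev, Polynomial.eval_prod, ← Finset.prod_mul_distrib]
    refine Finset.prod_congr rfl fun t ht => ?_
    simp only [Polynomial.eval_sub, Polynomial.eval_X, Polynomial.eval_C]
    push_cast
    ring
  have h3 : G.det = (∏ i, e i) * N.det := by
    rw [hGN, Matrix.det_mul_column]
    congr 1
    rw [show N.transpose.submatrix Fin.rev Fin.rev
        = N.transpose.submatrix Fin.revPerm Fin.revPerm from rfl,
      Matrix.det_submatrix_equiv_self, Matrix.det_transpose]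
  -- Step 4 : sign bookkeeping
  have hsign : (∏ i, e i) * (∏ i : Fin k, ∏ j ∈ Finset.Ioi i, (w j - w i))
      = ∏ p ∈ Finset.univ.filter (fun p : Fin k × Fin k => p.1 < p.2),
          ((m p.2 : ℝ) - (m p.1 : ℝ)) := by
    have hb : ∏ p ∈ Finset.univ.filter (fun p : Fin k × Fin k => p.1 < p.2), (w p.2 - w p.1)
        = ∏ p ∈ Finset.univ.filter (fun p : Fin k × Fin k => p.1 < p.2),
            ((m p.1 : ℝ) - (m p.2 : ℝ)) := by
      refine Finset.prod_nbij' (fun p => (Fin.rev p.2, Fin.rev p.1))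
        (fun p => (Fin.rev p.2, Fin.rev p.1)) ?_ ?_ ?_ ?_ ?_
      · intro p hp
        simp only [Finset.mem_filter, Finset.mem_univ, true_and] at hp ⊢
        exact Fin.rev_lt_rev.mpr hp
      · intro p hp
        simp only [Finset.mem_filter, Finset.mem_univ, true_and] at hp ⊢
        exact Fin.rev_lt_rev.mpr hp
      · intro p hp
        simp [Fin.rev_rev]
      · intro p hp
        simp [Fin.rev_rev]
      · intro p hp
        simp only [hw, Fin.rev_rev]
    rw [← prod_pairs (fun i j => w j - w i), hb]
    have hc2 : ∏ p ∈ Finset.univ.filter (fun p : Fin k × Fin k => p.1 < p.2),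
          ((m p.1 : ℝ) - (m p.2 : ℝ))
        = (∏ p ∈ Finset.univ.filter (fun p : Fin k × Fin k => p.1 < p.2), (-1 : ℝ))
          * ∏ p ∈ Finset.univ.filter (fun p : Fin k × Fin k => p.1 < p.2),
              ((m p.2 : ℝ) - (m p.1 : ℝ)) := by
      rw [← Finset.prod_mul_distrib]
      exact Finset.prod_congr rfl fun p _ => by ring
    rw [hc2, prod_pairs (fun i j => (-1 : ℝ)), ← mul_assoc, ← Finset.prod_mul_distrib]
    have hone : ∀ i : Fin k, e i * (∏ j ∈ Finset.Ioi i, (-1 : ℝ)) = 1 := by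
      intro i
      have hi := i.isLt
      simp only [he, Finset.prod_const, Nat.card_Ico, Fin.card_Ioi, ← pow_add]
      rw [show k - ((i : ℕ) + 1) + (k - 1 - (i : ℕ)) = 2 * (k - 1 - (i : ℕ)) from by omega,
        pow_mul]
      norm_num
    rw [Finset.prod_congr rfl fun i _ => hone i, Finset.prod_const_one, one_mul]
  -- Step 5 : the factorial factors
  have hfact : (∏ i, r i) * (∏ j, c j)
      = ∏ i : Fin k, (Nat.factorial (n + k - ((i : ℕ) + 1)) : ℝ)
          / ((Nat.factorial (m i) : ℝ) * (Nat.factorial (n + k - m i - 1) : ℝ)) := by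
    have hr2 : (∏ i, r i) = ∏ i : Fin k, (Nat.factorial (n + k - ((i : ℕ) + 1)) : ℝ) := by
      refine Fintype.prod_equiv Fin.revPerm _ _ fun i => ?_
      simp only [hr, Fin.revPerm_apply, Fin.val_rev]
      congr 2
      have := i.isLt
      omega
    rw [hr2, ← Finset.prod_mul_distrib]
    refine Finset.prod_congr rfl fun i _ => ?_
    simp only [hc]
    rw [show n + k - 1 - m i = n + k - m i - 1 from by omega]
    push_cast
    field_simp
  rw [h1, h2, h3, hdetN, ← hsign, ← hfact]
  ring
end

section
/- For real $\beta>0$, $\int_0^1 \frac{\log(\beta+u)}{\sqrt{u(1-u)}}\,du = 2\pi\,\log\Big(\frac{\sqrt{\beta}+\sqrt{\beta+1}}{2}\Big) + \pi\log 1$, i.e. the integral equals $2\pi\log\big((\sqrt{\beta}+\sqrt{\beta+1})/2\big)$. -/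
open Real

open Set Filter Topology

lemma meanvalue (z : ℝ) (hz0 : 0 ≤ z) (hz1 : z < 1) :
    ∫ t in (0:ℝ)..(2*π), Real.log (‖(1 - z * Complex.exp (t * Complex.I))‖) = 0 := by
  set f : ℂ → ℂ := fun w => Complex.log (1 - z * w) with hf
  set R : ℝ := (1 + z⁻¹)/2 with hR
  rcases eq_or_lt_of_le hz0 with h0 | hz0'
  · simp [← h0]
  have hR1 : 1 < R := by
    rw [hR]
    have : 1 < z⁻¹ := (one_lt_inv₀ hz0').mpr hz1
    linarith
  have hslit : ∀ w : ℂ, ‖w‖ ≤ R → (1 - z * w) ∈ Complex.slitPlane := by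
    intro w hw
    have he : (1 : ℂ) - z * w = 1 + (-(z * w)) := by ring
    rw [he]
    apply Complex.mem_slitPlane_of_norm_lt_one
    have h1 : ‖(z:ℂ)‖ * ‖w‖ ≤ z * R := by
      apply mul_le_mul _ hw (norm_nonneg _) hz0
      simp [abs_of_nonneg hz0]
    have hzR : z * R < 1 := by
      rw [hR]; nlinarith [mul_inv_cancel₀ (ne_of_gt hz0')]
    calc ‖-((z:ℂ) * w)‖ = ‖(z:ℂ)‖ * ‖w‖ := by rw [norm_neg, norm_mul]
      _ ≤ z * R := h1
      _ < 1 := hzR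
  have hdiff : DifferentiableOn ℂ f (Metric.closedBall 0 R) := by
    intro w hw
    apply DifferentiableAt.differentiableWithinAt
    apply DifferentiableAt.clog
    · fun_prop
    · apply hslit w
      simpa using Metric.mem_closedBall.mp hw
  have key := (hdiff.mono (Metric.closedBall_subset_closedBall hR1.le)).circleIntegral_sub_inv_smul (w := 0) (by simp)
  have hf0 : f 0 = 0 := by simp [hf]
  rw [hf0, smul_zero] at key
  rw [circleIntegral] at key
  simp only [deriv_circleMap, sub_zero, smul_eq_mul] at key
  have h1 : ∀ θ : ℝ, circleMap 0 1 θ * Complex.I * ((circleMap 0 1 θ)⁻¹ * f (circleMap 0 1 θ))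
      = Complex.I * f (circleMap 0 1 θ) := by
    intro θ
    have : circleMap 0 1 θ ≠ 0 := circleMap_ne_center one_ne_zero
    field_simp
  simp_rw [h1] at key
  rw [intervalIntegral.integral_const_mul] at key
  have key2 : (∫ θ in (0:ℝ)..2 * π, f (circleMap 0 1 θ)) = 0 := by
    rcases mul_eq_zero.mp key with h | h
    · exact absurd h Complex.I_ne_zero
    · exact h
  have hcont : Continuous fun θ : ℝ => f (circleMap 0 1 θ) := by
    rw [continuous_iff_continuousAt]
    intro θ
    apply ContinuousAt.clog
    · fun_prop
    · apply hslit
      simp [circleMap]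
      linarith
  have hre := Complex.reCLM.intervalIntegral_comp_comm
    (hcont.intervalIntegrable (μ := MeasureTheory.volume) 0 (2*π))
  rw [key2] at hre
  have : ∀ t : ℝ, Complex.reCLM (f (circleMap 0 1 t))
      = Real.log (‖(1 - z * Complex.exp (t * Complex.I))‖) := by
    intro t
    simp only [circleMap, hf, Complex.reCLM_apply, Complex.log_re]
    norm_num
  rw [intervalIntegral.integral_congr (fun t _ => this t)] at hre
  simpa using hre

lemma sqrt_inv_bound {u : ℝ} (hu0 : 0 < u) (hu1 : u < 1) :
    (Real.sqrt (u * (1 - u)))⁻¹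
      ≤ Real.sqrt 2 * ((Real.sqrt u)⁻¹ + (Real.sqrt (1 - u))⁻¹) := by
  have h2 : (0:ℝ) < Real.sqrt 2 := Real.sqrt_pos.mpr (by norm_num)
  rcases le_or_gt u (1/2) with h | h
  · have key : Real.sqrt (u / 2) ≤ Real.sqrt (u * (1 - u)) :=
      Real.sqrt_le_sqrt (by nlinarith)
    have hpos : (0:ℝ) < Real.sqrt (u / 2) := Real.sqrt_pos.mpr (by linarith)
    have h1 : (Real.sqrt (u * (1 - u)))⁻¹ ≤ (Real.sqrt (u / 2))⁻¹ :=
      inv_anti₀ hpos key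
    have heq : (Real.sqrt (u / 2))⁻¹ = Real.sqrt 2 * (Real.sqrt u)⁻¹ := by
      rw [Real.sqrt_div hu0.le]
      rw [inv_div]
      rw [div_eq_mul_inv]
    have hnn : 0 ≤ (Real.sqrt (1 - u))⁻¹ := by positivity
    calc (Real.sqrt (u * (1 - u)))⁻¹ ≤ Real.sqrt 2 * (Real.sqrt u)⁻¹ := by rw [← heq]; exact h1
      _ ≤ Real.sqrt 2 * ((Real.sqrt u)⁻¹ + (Real.sqrt (1 - u))⁻¹) := by nlinarith
  · have key : Real.sqrt ((1 - u) / 2) ≤ Real.sqrt (u * (1 - u)) :=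
      Real.sqrt_le_sqrt (by nlinarith)
    have hpos : (0:ℝ) < Real.sqrt ((1 - u) / 2) := Real.sqrt_pos.mpr (by linarith)
    have h1 : (Real.sqrt (u * (1 - u)))⁻¹ ≤ (Real.sqrt ((1 - u) / 2))⁻¹ :=
      inv_anti₀ hpos key
    have heq : (Real.sqrt ((1 - u) / 2))⁻¹ = Real.sqrt 2 * (Real.sqrt (1 - u))⁻¹ := by
      rw [Real.sqrt_div (by linarith)]
      rw [inv_div]
      rw [div_eq_mul_inv]
    have hnn : 0 ≤ (Real.sqrt u)⁻¹ := by positivity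
    calc (Real.sqrt (u * (1 - u)))⁻¹ ≤ Real.sqrt 2 * (Real.sqrt (1 - u))⁻¹ := by rw [← heq]; exact h1
      _ ≤ Real.sqrt 2 * ((Real.sqrt u)⁻¹ + (Real.sqrt (1 - u))⁻¹) := by nlinarith

lemma integrable_f (β : ℝ) (hβ : 0 < β) :
    IntervalIntegrable (fun u => Real.log (β + u) / Real.sqrt (u * (1 - u)))
      MeasureTheory.volume 0 1 := by
  set M := |Real.log β| + |Real.log (β + 1)| with hM
  have hM0 : 0 ≤ M := by positivity
  set g : ℝ → ℝ := fun u => M * (Real.sqrt 2 * (u ^ (-(1/2):ℝ) + (1-u) ^ (-(1/2):ℝ))) with hg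
  have hg_int : IntervalIntegrable g MeasureTheory.volume 0 1 := by
    apply IntervalIntegrable.const_mul
    apply IntervalIntegrable.const_mul
    apply IntervalIntegrable.add
    · exact intervalIntegral.intervalIntegrable_rpow' (by norm_num)
    · have h1 : IntervalIntegrable (fun x : ℝ => x ^ (-(1/2):ℝ)) MeasureTheory.volume 0 1 :=
        intervalIntegral.intervalIntegrable_rpow' (by norm_num)
      have h2 := (h1.comp_sub_left 1).symm
      simpa using h2
  apply hg_int.mono_fun
  · have m1 : Measurable fun u : ℝ => Real.log (β + u) :=
      Real.measurable_log.comp (measurable_const.add measurable_id)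
    have m2 : Measurable fun u : ℝ => Real.sqrt (u*(1-u)) :=
      Real.continuous_sqrt.measurable.comp (measurable_id.mul (measurable_const.sub measurable_id))
    exact (m1.div m2).aestronglyMeasurable
  · filter_upwards [MeasureTheory.ae_restrict_mem measurableSet_uIoc] with u hu
    rw [Set.uIoc_of_le (by norm_num : (0:ℝ) ≤ 1)] at hu
    obtain ⟨hu0, hu1⟩ := hu
    have hgnn : 0 ≤ g u := by
      have h3 : (0:ℝ) ≤ u ^ (-(1/2):ℝ) + (1-u) ^ (-(1/2):ℝ) :=
        add_nonneg (Real.rpow_nonneg hu0.le _) (Real.rpow_nonneg (by linarith) _)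
      exact mul_nonneg hM0 (mul_nonneg (Real.sqrt_nonneg 2) h3)
    rw [Real.norm_eq_abs, Real.norm_eq_abs, abs_of_nonneg hgnn]
    rcases eq_or_lt_of_le hu1 with h1 | h1
    · subst h1
      have hz : Real.log (β + 1) / Real.sqrt (1 * (1 - 1)) = 0 := by
        norm_num
      rw [hz, abs_zero]
      exact hgnn
    have hru : u ^ (-(1/2):ℝ) = (Real.sqrt u)⁻¹ := by
      rw [Real.rpow_neg hu0.le, ← Real.sqrt_eq_rpow]
    have hru' : (1-u) ^ (-(1/2):ℝ) = (Real.sqrt (1-u))⁻¹ := by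
      rw [Real.rpow_neg (by linarith), ← Real.sqrt_eq_rpow]
    have hlogM : |Real.log (β + u)| ≤ M := by
      have l1 : Real.log β ≤ Real.log (β + u) := Real.log_le_log hβ (by linarith)
      have l2 : Real.log (β + u) ≤ Real.log (β + 1) := Real.log_le_log (by linarith) (by linarith)
      rw [abs_le]
      constructor
      · have := neg_abs_le (Real.log β); have := le_abs_self (Real.log (β+1));
        have := abs_nonneg (Real.log (β+1)); linarith
      · have := le_abs_self (Real.log (β+1)); have := abs_nonneg (Real.log β); linarith
    have hbound := sqrt_inv_bound hu0 h1
    have hinvnn : (0:ℝ) ≤ (Real.sqrt (u * (1-u)))⁻¹ := by positivity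
    rw [abs_div, div_eq_mul_inv]
    have habs : |Real.sqrt (u * (1-u))| = Real.sqrt (u * (1-u)) := abs_of_nonneg (Real.sqrt_nonneg _)
    rw [habs, hg]
    simp only [hru, hru']
    calc |Real.log (β + u)| * (Real.sqrt (u * (1-u)))⁻¹
        ≤ M * (Real.sqrt 2 * ((Real.sqrt u)⁻¹ + (Real.sqrt (1-u))⁻¹)) := by
          apply mul_le_mul hlogM hbound hinvnn hM0
      _ = M * (Real.sqrt 2 * ((Real.sqrt u)⁻¹ + (Real.sqrt (1-u))⁻¹)) := rfl

lemma cosint (β : ℝ) (hβ : 0 < β) :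
    ∫ t in (0:ℝ)..π, Real.log (β + (1 - Real.cos t)/2)
      = 2 * π * Real.log ((Real.sqrt β + Real.sqrt (β+1)) / 2) := by
  set c := Real.sqrt β with hc
  set d := Real.sqrt (β+1) with hd
  have hc2 : c^2 = β := Real.sq_sqrt hβ.le
  have hd2 : d^2 = β + 1 := Real.sq_sqrt (by linarith)
  have hc0 : 0 < c := Real.sqrt_pos.mpr hβ
  have hd0 : 0 < d := Real.sqrt_pos.mpr (by linarith)
  have hcd : c < d := by nlinarith
  have hd1 : 1 < d := by nlinarith
  set z := (d - c)^2 with hz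
  have hz0 : 0 < z := pow_pos (by linarith : (0:ℝ) < d - c) 2
  have hz1 : z < 1 := by nlinarith
  have habs2 : ∀ t : ℝ, (‖(1 - z * Complex.exp (t * Complex.I))‖)^2
      = 4*z*(β + (1 - Real.cos t)/2) := by
    intro t
    rw [Complex.sq_norm, Complex.normSq_apply]
    simp only [Complex.sub_re, Complex.sub_im, Complex.one_re, Complex.one_im,
      Complex.mul_re, Complex.mul_im, Complex.ofReal_re, Complex.ofReal_im,
      Complex.exp_ofReal_mul_I_re, Complex.exp_ofReal_mul_I_im]
    have hpy : Real.sin t ^ 2 + Real.cos t ^ 2 = 1 := Real.sin_sq_add_cos_sq t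
    have h1 : d^2 - c^2 = 1 := by rw [hc2, hd2]; ring
    rw [hz, ← hc2]
    linear_combination ((d-c)^2)^2 * hpy + (2*(d-c)^2 - (d^2-c^2+1)) * h1
  -- positivity of the integrand argument
  have hpos : ∀ t : ℝ, 0 < β + (1 - Real.cos t)/2 := by
    intro t
    have := Real.cos_le_one t
    linarith
  have habspos : ∀ t : ℝ, 0 < ‖(1 - z * Complex.exp (t * Complex.I))‖ := by
    intro t
    have h2 := habs2 t
    nlinarith [hpos t, norm_nonneg (1 - (z:ℂ) * Complex.exp (t * Complex.I))]
  -- pointwise log identity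
  have hlog : ∀ t : ℝ, Real.log (β + (1 - Real.cos t)/2)
      = 2 * Real.log (‖(1 - z * Complex.exp (t * Complex.I))‖) - Real.log (4*z) := by
    intro t
    have h2 := habs2 t
    have : β + (1 - Real.cos t)/2 = (‖(1 - z * Complex.exp (t * Complex.I))‖)^2 / (4*z) := by
      rw [h2]; field_simp
    rw [this, Real.log_div (pow_ne_zero 2 (habspos t).ne') (by nlinarith : (0:ℝ) < 4*z).ne', Real.log_pow]
    push_cast
    ring
  -- continuity of the log-abs function
  have hgcont : Continuous fun t : ℝ => Real.log (‖(1 - z * Complex.exp (t * Complex.I))‖) := by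
    apply Continuous.log (continuous_norm.comp (by fun_prop))
    intro t; exact (habspos t).ne'
  -- integral over [0, 2π]
  have htwo : ∫ t in (0:ℝ)..(2*π), Real.log (β + (1 - Real.cos t)/2) = -(2*π*Real.log (4*z)) := by
    have : ∀ t ∈ uIcc (0:ℝ) (2*π), Real.log (β + (1 - Real.cos t)/2)
        = 2 * Real.log (‖(1 - z * Complex.exp (t * Complex.I))‖) - Real.log (4*z) :=
      fun t _ => hlog t
    rw [intervalIntegral.integral_congr this, intervalIntegral.integral_sub
      ((show Continuous fun t : ℝ => (2:ℝ) * Real.log (‖(1 - z * Complex.exp (t * Complex.I))‖) from continuous_const.mul hgcont).intervalIntegrable _ _) (intervalIntegrable_const),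
      intervalIntegral.integral_const_mul, meanvalue z hz0.le hz1]
    simp [mul_comm]
  -- symmetry: integral over [π, 2π] equals integral over [0, π]
  have hsymm : ∫ t in π..(2*π), Real.log (β + (1 - Real.cos t)/2)
      = ∫ t in (0:ℝ)..π, Real.log (β + (1 - Real.cos t)/2) := by
    have := intervalIntegral.integral_comp_sub_left (a := (0:ℝ)) (b := π)
      (fun t => Real.log (β + (1 - Real.cos t)/2)) (2*π)
    rw [show 2*π - π = π by ring, show 2*π - 0 = 2*π by ring] at this
    rw [← this]
    apply intervalIntegral.integral_congr
    intro t _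
    simp [Real.cos_two_pi_sub]
  have hcont2 : Continuous fun t : ℝ => Real.log (β + (1 - Real.cos t)/2) := by
    apply Continuous.log
    · fun_prop
    · intro t; exact (hpos t).ne'
  have hsplit : (∫ t in (0:ℝ)..π, Real.log (β + (1 - Real.cos t)/2))
      + ∫ t in π..(2*π), Real.log (β + (1 - Real.cos t)/2)
      = ∫ t in (0:ℝ)..(2*π), Real.log (β + (1 - Real.cos t)/2) :=
    intervalIntegral.integral_add_adjacent_intervals
      (hcont2.intervalIntegrable _ _) (hcont2.intervalIntegrable _ _)
  have hhalf : ∫ t in (0:ℝ)..π, Real.log (β + (1 - Real.cos t)/2) = -(π * Real.log (4*z)) := by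
    rw [hsymm] at hsplit
    rw [htwo] at hsplit
    linarith
  rw [hhalf]
  -- final algebra: -π log(4z) = 2π log((c+d)/2)
  have hinv : (c + d)/2 = (2*(d - c))⁻¹ := by
    apply eq_inv_of_mul_eq_one_left
    nlinarith
  have h4z : (4*z) = (2*(d-c))^2 := by rw [hz]; ring
  rw [h4z, Real.log_pow, hinv, Real.log_inv]
  push_cast
  ring

lemma subst_eq (β : ℝ) (hβ : 0 < β) {a b : ℝ} (ha : 0 < a) (hab : a ≤ b) (hb : b < 1) :
    ∫ u in a..b, Real.log (β + u) / Real.sqrt (u * (1 - u))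
      = ∫ t in Real.arccos (1 - 2*a)..Real.arccos (1 - 2*b),
          Real.log (β + (1 - Real.cos t)/2) := by
  set g : ℝ → ℝ := fun u => Real.log (β + u) / Real.sqrt (u * (1 - u)) with hgdef
  set φ : ℝ → ℝ := fun t => (1 - Real.cos t)/2 with hφ
  set α₁ := Real.arccos (1 - 2*a) with hα₁
  set α₂ := Real.arccos (1 - 2*b) with hα₂
  have hm1a : -1 ≤ 1 - 2*a := by linarith
  have h1a : 1 - 2*a ≤ 1 := by linarith
  have hm1b : -1 ≤ 1 - 2*b := by linarith
  have h1b : 1 - 2*b ≤ 1 := by linarith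
  have hα₁0 : 0 < α₁ := Real.arccos_pos.mpr (by linarith)
  have hα₂π : α₂ < π := by
    refine lt_of_le_of_ne (Real.arccos_le_pi _) fun h => ?_
    have := Real.arccos_eq_pi.mp h
    linarith
  have hαle : α₁ ≤ α₂ :=
    Real.strictAntiOn_arccos.antitoneOn ⟨hm1b, h1b⟩ ⟨hm1a, h1a⟩ (by linarith)
  have hφ₁ : φ α₁ = a := by
    rw [hφ]; simp only [hα₁, Real.cos_arccos hm1a h1a]; ring
  have hφ₂ : φ α₂ = b := by
    rw [hφ]; simp only [hα₂, Real.cos_arccos hm1b h1b]; ring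
  -- derivative of φ
  have hderiv : ∀ x ∈ uIcc α₁ α₂, HasDerivAt φ (Real.sin x / 2) x := by
    intro x _
    have h1 : HasDerivAt (fun t : ℝ => 1 - Real.cos t) (Real.sin x) x := by
      simpa using (Real.hasDerivAt_cos x).const_sub 1
    simpa [hφ] using h1.div_const 2
  have hcont' : ContinuousOn (fun x => Real.sin x / 2) (uIcc α₁ α₂) :=
    (Real.continuous_sin.div_const 2).continuousOn
  -- image of φ is inside [a,b]
  have himage : φ '' (uIcc α₁ α₂) ⊆ Icc a b := by
    rw [uIcc_of_le hαle]
    rintro v ⟨t, ht, rfl⟩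
    have ht1 : 0 ≤ t := le_trans hα₁0.le ht.1
    have ht2 : t ≤ π := le_trans ht.2 hα₂π.le
    have hc1 : Real.cos t ≤ Real.cos α₁ := by
      apply Real.strictAntiOn_cos.antitoneOn ⟨hα₁0.le, le_trans hαle hα₂π.le⟩ ⟨ht1, ht2⟩ ht.1
    have hc2 : Real.cos α₂ ≤ Real.cos t := by
      apply Real.strictAntiOn_cos.antitoneOn ⟨ht1, ht2⟩ ⟨le_trans hα₁0.le hαle, hα₂π.le⟩ ht.2
    rw [hα₁, Real.cos_arccos hm1a h1a] at hc1
    rw [hα₂, Real.cos_arccos hm1b h1b] at hc2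
    constructor
    · rw [hφ]; dsimp only; linarith
    · rw [hφ]; dsimp only; linarith
  -- continuity of g on the image
  have hgcont : ContinuousOn g (φ '' (uIcc α₁ α₂)) := by
    apply ContinuousOn.mono ?_ himage
    intro u hu
    have hu0 : 0 < u := lt_of_lt_of_le ha hu.1
    have hu1 : u < 1 := lt_of_le_of_lt hu.2 hb
    apply ContinuousAt.continuousWithinAt
    apply ContinuousAt.div
    · exact (Real.continuousAt_log (by linarith : β + u ≠ 0)).comp
        ((continuous_const.add continuous_id).continuousAt)
    · exact (Real.continuous_sqrt.continuousAt).comp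
        ((continuous_id.mul (continuous_const.sub continuous_id)).continuousAt)
    · exact (Real.sqrt_pos.mpr (by nlinarith)).ne'
  have key := intervalIntegral.integral_comp_smul_deriv' hderiv hcont' hgcont
  rw [hφ₁, hφ₂] at key
  rw [← key]
  apply intervalIntegral.integral_congr
  intro t ht
  rw [uIcc_of_le hαle] at ht
  have ht0 : 0 < t := lt_of_lt_of_le hα₁0 ht.1
  have htπ : t < π := lt_of_le_of_lt ht.2 hα₂π
  have hsin : 0 < Real.sin t := Real.sin_pos_of_pos_of_lt_pi ht0 htπ
  have hsq : φ t * (1 - φ t) = (Real.sin t / 2)^2 := by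
    have := Real.sin_sq_add_cos_sq t
    rw [hφ]; dsimp only; nlinarith
  have : g (φ t) = Real.log (β + φ t) / (Real.sin t / 2) := by
    rw [hgdef]; dsimp only; rw [hsq, Real.sqrt_sq (by linarith)]
  have hφt : β + φ t = β + (1 - Real.cos t)/2 := by rw [hφ]
  simp only [Function.comp, smul_eq_mul, this, hφt]
  rw [mul_comm, div_mul_cancel₀ _ (by positivity : Real.sin t / 2 ≠ 0)]

/-- `∫₀¹ log(β+u)/√(u(1-u)) du = 2π log((√β + √(β+1))/2)` for `β > 0`. -/
theorem integral_log_over_sqrt (β : ℝ) (hβ : 0 < β) :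
    ∫ u in (0:ℝ)..1, Real.log (β + u) / Real.sqrt (u * (1 - u))
      = 2 * π * Real.log ((Real.sqrt β + Real.sqrt (β + 1)) / 2) := by
  set f : ℝ → ℝ := fun u => Real.log (β + u) / Real.sqrt (u * (1 - u)) with hf
  set h : ℝ → ℝ := fun t => Real.log (β + (1 - Real.cos t)/2) with hh
  have hint := integrable_f β hβ
  have hhcont : Continuous h := by
    apply Continuous.log
    · fun_prop
    · intro t
      have := Real.cos_le_one t
      have : (0:ℝ) < β + (1 - Real.cos t)/2 := by linarith
      linarith
  set F : ℝ → ℝ := fun x => ∫ u in (0:ℝ)..x, f u with hF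
  set H : ℝ → ℝ := fun x => ∫ t in (0:ℝ)..x, h t with hH
  have hFcont : ContinuousOn F (Icc 0 1) := by
    have := intervalIntegral.continuousOn_primitive_interval'
      (μ := MeasureTheory.volume) (b₁ := (0:ℝ)) (b₂ := 1) hint left_mem_uIcc
    rwa [uIcc_of_le (zero_le_one)] at this
  have hHcont : Continuous H :=
    intervalIntegral.continuous_primitive (fun a b => hhcont.intervalIntegrable a b) 0
  -- key identity on interior
  have hkey : ∀ a b : ℝ, 0 < a → a ≤ b → b < 1 →
      F b - F a = H (Real.arccos (1 - 2*b)) - H (Real.arccos (1 - 2*a)) := by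
    intro a b ha hab hb
    have hia : IntervalIntegrable f MeasureTheory.volume 0 a :=
      hint.mono_set (by rw [uIcc_of_le ha.le, uIcc_of_le zero_le_one]; exact Icc_subset_Icc le_rfl (by linarith))
    have hib : IntervalIntegrable f MeasureTheory.volume 0 b :=
      hint.mono_set (by rw [uIcc_of_le (by linarith : (0:ℝ) ≤ b), uIcc_of_le zero_le_one]; exact Icc_subset_Icc le_rfl hb.le)
    have h1 : F b - F a = ∫ u in a..b, f u :=
      intervalIntegral.integral_interval_sub_left hib hia
    have h2 : H (Real.arccos (1 - 2*b)) - H (Real.arccos (1 - 2*a))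
        = ∫ t in Real.arccos (1 - 2*a)..Real.arccos (1 - 2*b), h t :=
      intervalIntegral.integral_interval_sub_left
        (hhcont.intervalIntegrable _ _) (hhcont.intervalIntegrable _ _)
    rw [h1, h2]
    exact subst_eq β hβ ha hab hb
  -- limits
  have hF0 : F 0 = 0 := intervalIntegral.integral_same
  have hH0 : H 0 = 0 := intervalIntegral.integral_same
  -- Step 1: for every b in (0,1), F b = H (arccos (1-2b))
  have step1 : ∀ b ∈ Ioo (0:ℝ) 1, F b = H (Real.arccos (1 - 2*b)) := by
    intro b hb
    have hIcc_mem : Icc (0:ℝ) 1 ∈ 𝓝[>] (0:ℝ) :=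
      mem_of_superset (Ioo_mem_nhdsGT_of_mem ⟨le_refl 0, one_pos⟩) Ioo_subset_Icc_self
    have hl : 𝓝[>] (0:ℝ) ≤ 𝓝[Icc (0:ℝ) 1] 0 := by
      rw [nhdsWithin]
      exact le_inf nhdsWithin_le_nhds (le_principal_iff.mpr hIcc_mem)
    have T1 : Tendsto (fun a => F b - F a) (𝓝[>] (0:ℝ)) (𝓝 (F b - F 0)) :=
      tendsto_const_nhds.sub ((hFcont 0 ⟨le_refl 0, zero_le_one⟩).tendsto.mono_left hl)
    have TA : Tendsto (fun a : ℝ => Real.arccos (1 - 2*a)) (𝓝 (0:ℝ)) (𝓝 0) := by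
      have hlin : Continuous (fun a : ℝ => 1 - 2*a) := by fun_prop
      have : Tendsto (fun a : ℝ => 1 - 2*a) (𝓝 (0:ℝ)) (𝓝 1) := by
        simpa using hlin.tendsto 0
      have := (Real.continuous_arccos.tendsto 1).comp this
      rwa [Real.arccos_one] at this
    have T2 : Tendsto (fun a => H (Real.arccos (1 - 2*b)) - H (Real.arccos (1 - 2*a)))
        (𝓝[>] (0:ℝ)) (𝓝 (H (Real.arccos (1 - 2*b)) - H 0)) := by
      apply tendsto_const_nhds.sub
      exact ((hHcont.tendsto 0).comp (TA.mono_left nhdsWithin_le_nhds))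
    have heq : ∀ᶠ a in 𝓝[>] (0:ℝ), F b - F a
        = H (Real.arccos (1 - 2*b)) - H (Real.arccos (1 - 2*a)) := by
      filter_upwards [Ioo_mem_nhdsGT_of_mem (⟨le_refl 0, hb.1⟩ : (0:ℝ) ∈ Ico 0 b)] with a haa
      exact hkey a b haa.1 haa.2.le hb.2
    have := tendsto_nhds_unique (T1.congr' heq) T2
    rw [hF0, hH0] at this
    linarith [this]
  -- Step 2: limit b → 1⁻
  have hIcc_mem1 : Icc (0:ℝ) 1 ∈ 𝓝[<] (1:ℝ) :=
    mem_of_superset (Ioo_mem_nhdsLT_of_mem ⟨zero_lt_one, le_refl 1⟩) Ioo_subset_Icc_self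
  have hl1 : 𝓝[<] (1:ℝ) ≤ 𝓝[Icc (0:ℝ) 1] 1 := by
    rw [nhdsWithin]
    exact le_inf nhdsWithin_le_nhds (le_principal_iff.mpr hIcc_mem1)
  have T1 : Tendsto F (𝓝[<] (1:ℝ)) (𝓝 (F 1)) :=
    (hFcont 1 ⟨zero_le_one, le_refl 1⟩).tendsto.mono_left hl1
  have TA : Tendsto (fun b : ℝ => Real.arccos (1 - 2*b)) (𝓝 (1:ℝ)) (𝓝 π) := by
    have hlin : Continuous (fun b : ℝ => 1 - 2*b) := by fun_prop
    have h' : Tendsto (fun b : ℝ => 1 - 2*b) (𝓝 (1:ℝ)) (𝓝 (-1)) := by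
      have := hlin.tendsto 1
      norm_num at this
      exact this
    have := (Real.continuous_arccos.tendsto (-1)).comp h'
    rwa [Real.arccos_neg_one] at this
  have T2 : Tendsto (fun b => H (Real.arccos (1 - 2*b))) (𝓝[<] (1:ℝ)) (𝓝 (H π)) :=
    (hHcont.tendsto π).comp (TA.mono_left nhdsWithin_le_nhds)
  have heq : ∀ᶠ b in 𝓝[<] (1:ℝ), F b = H (Real.arccos (1 - 2*b)) := by
    filter_upwards [Ioo_mem_nhdsLT_of_mem (⟨zero_lt_one, le_refl 1⟩ : (1:ℝ) ∈ Ioc 0 1)] with b hbb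
    exact step1 b hbb
  have hfinal : F 1 = H π := tendsto_nhds_unique (T1.congr' heq) T2
  have hgoal : (∫ u in (0:ℝ)..1, f u) = ∫ t in (0:ℝ)..π, h t := hfinal
  rw [show (∫ u in (0:ℝ)..1, Real.log (β + u) / Real.sqrt (u * (1 - u)))
    = ∫ u in (0:ℝ)..1, f u from rfl, hgoal]
  exact cosint β hβ
end

section
/- For real numbers $\beta>0$ and $w>1$, $\int_0^1 \frac{du}{(w-u)(\beta+u)\sqrt{u(1-u)}} = \frac{\pi}{\beta+w}\Big(\frac{1}{\sqrt{\beta(\beta+1)}}+\frac{1}{\sqrt{w(w-1)}}\Big)$. -/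
open Real Set Filter MeasureTheory intervalIntegral Topology

noncomputable def Faux (c x : ℝ) : ℝ :=
  (2 / Real.sqrt (c * (c + 1))) * Real.arctan (Real.sqrt ((c + 1) / c) * (Real.sqrt x / Real.sqrt (1 - x)))

lemma sqrt_mul_self' {c : ℝ} (hc : 0 < c) : Real.sqrt (c * (c + 1)) = c * Real.sqrt ((c + 1) / c) := by
  rw [show c * Real.sqrt ((c+1)/c) = Real.sqrt (c^2) * Real.sqrt ((c+1)/c) by
    rw [Real.sqrt_sq hc.le], ← Real.sqrt_mul (by positivity)]
  congr 1
  field_simp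

lemma Faux_hasDeriv {c : ℝ} (hc : 0 < c) {x : ℝ} (hx : x ∈ Set.Ioo (0:ℝ) 1) :
    HasDerivAt (Faux c) (1 / ((c + x) * Real.sqrt (x * (1 - x)))) x := by
  obtain ⟨hx0, hx1⟩ := hx
  have h1x : (0:ℝ) < 1 - x := by linarith
  have hs : 0 < Real.sqrt x := Real.sqrt_pos.mpr hx0
  have ht : 0 < Real.sqrt (1 - x) := Real.sqrt_pos.mpr h1x
  have ha : 0 < Real.sqrt ((c + 1) / c) := Real.sqrt_pos.mpr (by positivity)
  have hst : Real.sqrt (x * (1 - x)) = Real.sqrt x * Real.sqrt (1 - x) := Real.sqrt_mul hx0.le _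
  have d1 : HasDerivAt Real.sqrt (1 / (2 * Real.sqrt x)) x := Real.hasDerivAt_sqrt hx0.ne'
  have dlin : HasDerivAt (fun y : ℝ => 1 - y) (-1) x := (hasDerivAt_id x).const_sub 1
  have d2 : HasDerivAt (fun y => Real.sqrt (1 - y)) (1 / (2 * Real.sqrt (1 - x)) * (-1)) x :=
    (Real.hasDerivAt_sqrt h1x.ne').comp x dlin
  have d3 := (d1.div d2 ht.ne').const_mul (Real.sqrt ((c + 1) / c))
  have d4 := ((Real.hasDerivAt_arctan _).comp x d3).const_mul (2 / Real.sqrt (c * (c + 1)))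
  refine HasDerivAt.congr_deriv d4 (Eq.symm ?_)
  rw [hst, sqrt_mul_self' hc]
  set s := Real.sqrt x with hsdef
  set t := Real.sqrt (1 - x) with htdef
  set a := Real.sqrt ((c + 1) / c) with hadef
  have hs2 : s ^ 2 = x := Real.sq_sqrt hx0.le
  have ht2 : t ^ 2 = 1 - x := Real.sq_sqrt h1x.le
  have ha2 : a ^ 2 = (c + 1) / c := Real.sq_sqrt (by positivity)
  have hcx : c + x ≠ 0 := by positivity
  have hden : 1 + (a * (s / t)) ^ 2 ≠ 0 := by positivity
  have hca : c * a ^ 2 = c + 1 := by rw [ha2]; field_simp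
  simp only [Pi.div_apply]
  field_simp
  rw [← hsdef, ← htdef]
  linear_combination (t^2*s^2) * hca + (t^2 - x*t^2) * hs2 - (x*t^2) * ht2

lemma Faux_tendsto_zero {c : ℝ} (hc : 0 < c) : Tendsto (Faux c) (𝓝[>] (0:ℝ)) (𝓝 0) := by
  have hcont : ContinuousAt (Faux c) 0 := by
    apply ContinuousAt.mul continuousAt_const
    apply Real.continuous_arctan.continuousAt.comp
    apply ContinuousAt.mul continuousAt_const
    apply ContinuousAt.div
    · exact Real.continuous_sqrt.continuousAt
    · exact ((Real.continuous_sqrt.comp (continuous_const.sub continuous_id))).continuousAt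
    · simp
  have h0 : Faux c 0 = 0 := by simp [Faux]
  simpa [h0] using hcont.tendsto.mono_left nhdsWithin_le_nhds

lemma Faux_tendsto_one {c : ℝ} (hc : 0 < c) :
    Tendsto (Faux c) (𝓝[<] (1:ℝ)) (𝓝 (π / Real.sqrt (c * (c + 1)))) := by
  have hk : 0 < Real.sqrt (c * (c + 1)) := Real.sqrt_pos.mpr (by positivity)
  have ha : 0 < Real.sqrt ((c + 1) / c) := Real.sqrt_pos.mpr (by positivity)
  set G : ℝ → ℝ := fun x =>
    (2 / Real.sqrt (c * (c + 1))) * (π / 2 - Real.arctan (Real.sqrt (1 - x) / (Real.sqrt ((c + 1) / c) * Real.sqrt x)))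
  have hGc : ContinuousAt G 1 := by
    apply ContinuousAt.mul continuousAt_const
    apply ContinuousAt.sub continuousAt_const
    apply Real.continuous_arctan.continuousAt.comp
    apply ContinuousAt.div
    · exact ((Real.continuous_sqrt.comp (continuous_const.sub continuous_id))).continuousAt
    · exact (continuous_const.mul Real.continuous_sqrt).continuousAt
    · simp [ha.ne']
  have hG1 : G 1 = π / Real.sqrt (c * (c + 1)) := by
    simp only [G, sub_self, Real.sqrt_zero, zero_div, Real.arctan_zero, sub_zero]
    ring
  have hmem : Set.Ioo (0:ℝ) 1 ∈ 𝓝[<] (1:ℝ) := Ioo_mem_nhdsLT_of_mem ⟨by norm_num, le_refl 1⟩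
  have hGt : Tendsto G (𝓝[<] (1:ℝ)) (𝓝 (π / Real.sqrt (c * (c + 1)))) := by
    rw [← hG1]
    exact hGc.tendsto.mono_left nhdsWithin_le_nhds
  refine Tendsto.congr' ?_ hGt
  · filter_upwards [hmem] with x hx
    have hs : 0 < Real.sqrt x := Real.sqrt_pos.mpr hx.1
    have ht : 0 < Real.sqrt (1 - x) := Real.sqrt_pos.mpr (by linarith [hx.2])
    have hy : 0 < Real.sqrt ((c + 1) / c) * (Real.sqrt x / Real.sqrt (1 - x)) := by positivity
    have := Real.arctan_inv_of_pos hy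
    have hinv : (Real.sqrt ((c + 1) / c) * (Real.sqrt x / Real.sqrt (1 - x)))⁻¹
        = Real.sqrt (1 - x) / (Real.sqrt ((c + 1) / c) * Real.sqrt x) := by
      field_simp
    rw [hinv] at this
    simp only [G, Faux]
    rw [this]
    ring

lemma f_intInt (β w : ℝ) (hβ : 0 < β) (hw : 1 < w) :
    IntervalIntegrable (fun u => 1 / ((w - u) * (β + u) * Real.sqrt (u * (1 - u)))) volume 0 1 := by
  have h2 : (0:ℝ) < Real.sqrt 2 := Real.sqrt_pos.mpr (by norm_num)
  set C := Real.sqrt 2 / ((w - 1) * β) with hCdef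
  have hC : 0 < C := div_pos h2 (mul_pos (by linarith) hβ)
  have hg : IntervalIntegrable (fun u : ℝ => C * (u ^ (-(1/2):ℝ) + (1 - u) ^ (-(1/2):ℝ))) volume 0 1 := by
    apply IntervalIntegrable.const_mul
    apply IntervalIntegrable.add
    · exact intervalIntegrable_rpow' (by norm_num)
    · have := (intervalIntegrable_rpow' (a:=0) (b:=1) (r:=-(1/2)) (by norm_num)).comp_sub_left 1
      simpa using this.symm
  rw [intervalIntegrable_iff, uIoc_of_le zero_le_one] at hg ⊢
  refine MeasureTheory.Integrable.mono hg ?_ ?_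
  · apply Measurable.aestronglyMeasurable
    fun_prop
  · filter_upwards [ae_restrict_mem measurableSet_Ioc] with u hu
    obtain ⟨hu0, hu1⟩ := hu
    have hwu : 0 < w - u := by linarith
    have hbu : 0 < β + u := by linarith
    have hgnn : 0 ≤ C * (u ^ (-(1/2):ℝ) + (1 - u) ^ (-(1/2):ℝ)) := by
      have : (0:ℝ) ≤ u ^ (-(1/2):ℝ) := Real.rpow_nonneg hu0.le _
      have : (0:ℝ) ≤ (1-u) ^ (-(1/2):ℝ) := Real.rpow_nonneg (by linarith) _
      positivity
    rcases eq_or_lt_of_le hu1 with h1 | h1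
    · subst h1
      have hz : (1:ℝ) / ((w - 1) * (β + 1) * Real.sqrt (1 * (1 - 1))) = 0 := by
        norm_num
      rw [hz, norm_zero, Real.norm_eq_abs, abs_of_nonneg hgnn]
      exact hgnn
    · have h1u : 0 < 1 - u := by linarith
      have hs : 0 < Real.sqrt u := Real.sqrt_pos.mpr hu0
      have ht : 0 < Real.sqrt (1 - u) := Real.sqrt_pos.mpr h1u
      have e1 : u ^ (-(1/2):ℝ) = (Real.sqrt u)⁻¹ := by
        rw [Real.rpow_neg hu0.le, Real.sqrt_eq_rpow]
      have e2 : (1-u) ^ (-(1/2):ℝ) = (Real.sqrt (1-u))⁻¹ := by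
        rw [Real.rpow_neg h1u.le, Real.sqrt_eq_rpow]
      have hsm : Real.sqrt (u * (1 - u)) = Real.sqrt u * Real.sqrt (1 - u) := Real.sqrt_mul hu0.le _
      have hfnn : (0:ℝ) ≤ 1 / ((w - u) * (β + u) * Real.sqrt (u * (1 - u))) := by
        rw [hsm]; positivity
      rw [Real.norm_eq_abs, Real.norm_eq_abs, abs_of_nonneg hfnn, abs_of_nonneg hgnn, e1, e2, hsm]
      have hfac : (w-1)*β ≤ (w-u)*(β+u) := by nlinarith
      rcases le_or_gt u (1/2) with hc | hc
      · have key1 : (1:ℝ) ≤ Real.sqrt 2 * Real.sqrt (1-u) := by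
          calc (1:ℝ) = Real.sqrt 1 := Real.sqrt_one.symm
            _ ≤ Real.sqrt (2*(1-u)) := Real.sqrt_le_sqrt (by linarith)
            _ = Real.sqrt 2 * Real.sqrt (1-u) := Real.sqrt_mul (by norm_num) _
        have key : 1 / ((w-u)*(β+u)*(Real.sqrt u*Real.sqrt (1-u))) ≤ Real.sqrt 2 / ((w-1)*β*Real.sqrt u) := by
          rw [div_le_div_iff₀ (by positivity) (mul_pos (mul_pos (by linarith) hβ) hs)]
          have hmm : (w-1)*β*1 ≤ (w-u)*(β+u)*(Real.sqrt 2*Real.sqrt (1-u)) :=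
            mul_le_mul hfac key1 zero_le_one (mul_pos hwu hbu).le
          calc 1*((w-1)*β*Real.sqrt u) = ((w-1)*β*1)*Real.sqrt u := by ring
            _ ≤ ((w-u)*(β+u)*(Real.sqrt 2*Real.sqrt (1-u)))*Real.sqrt u :=
                mul_le_mul_of_nonneg_right hmm (Real.sqrt_nonneg u)
            _ = Real.sqrt 2*((w-u)*(β+u)*(Real.sqrt u*Real.sqrt (1-u))) := by ring
        calc 1 / ((w-u)*(β+u)*(Real.sqrt u*Real.sqrt (1-u))) ≤ Real.sqrt 2 / ((w-1)*β*Real.sqrt u) := key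
          _ = C * (Real.sqrt u)⁻¹ := by rw [hCdef]; field_simp
          _ ≤ C * ((Real.sqrt u)⁻¹ + (Real.sqrt (1-u))⁻¹) := by
              apply mul_le_mul_of_nonneg_left _ hC.le
              exact le_add_of_nonneg_right (by positivity)
      · have key1 : (1:ℝ) ≤ Real.sqrt 2 * Real.sqrt u := by
          calc (1:ℝ) = Real.sqrt 1 := Real.sqrt_one.symm
            _ ≤ Real.sqrt (2*u) := Real.sqrt_le_sqrt (by linarith)
            _ = Real.sqrt 2 * Real.sqrt u := Real.sqrt_mul (by norm_num) _
        have key : 1 / ((w-u)*(β+u)*(Real.sqrt u*Real.sqrt (1-u))) ≤ Real.sqrt 2 / ((w-1)*β*Real.sqrt (1-u)) := by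
          rw [div_le_div_iff₀ (by positivity) (mul_pos (mul_pos (by linarith) hβ) ht)]
          have hmm : (w-1)*β*1 ≤ (w-u)*(β+u)*(Real.sqrt 2*Real.sqrt u) :=
            mul_le_mul hfac key1 zero_le_one (mul_pos hwu hbu).le
          calc 1*((w-1)*β*Real.sqrt (1-u)) = ((w-1)*β*1)*Real.sqrt (1-u) := by ring
            _ ≤ ((w-u)*(β+u)*(Real.sqrt 2*Real.sqrt u))*Real.sqrt (1-u) :=
                mul_le_mul_of_nonneg_right hmm (Real.sqrt_nonneg _)
            _ = Real.sqrt 2*((w-u)*(β+u)*(Real.sqrt u*Real.sqrt (1-u))) := by ring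
        calc 1 / ((w-u)*(β+u)*(Real.sqrt u*Real.sqrt (1-u))) ≤ Real.sqrt 2 / ((w-1)*β*Real.sqrt (1-u)) := key
          _ = C * (Real.sqrt (1-u))⁻¹ := by rw [hCdef]; field_simp
          _ ≤ C * ((Real.sqrt u)⁻¹ + (Real.sqrt (1-u))⁻¹) := by
              apply mul_le_mul_of_nonneg_left _ hC.le
              exact le_add_of_nonneg_left (by positivity)

/-- `∫₀¹ du/((w-u)(β+u)√(u(1-u))) = (π/(β+w))(1/√(β(β+1)) + 1/√(w(w-1)))`
for `β > 0` and `w > 1`. -/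
theorem integral_rational_over_sqrt (β w : ℝ) (hβ : 0 < β) (hw : 1 < w) :
    ∫ u in (0:ℝ)..1, 1 / ((w - u) * (β + u) * Real.sqrt (u * (1 - u)))
      = π / (β + w) * (1 / Real.sqrt (β * (β + 1)) + 1 / Real.sqrt (w * (w - 1))) := by
  have hw1 : (0:ℝ) < w - 1 := by linarith
  have hbw : (0:ℝ) < β + w := by linarith
  set f : ℝ → ℝ := fun u => 1 / ((w - u) * (β + u) * Real.sqrt (u * (1 - u))) with hfdef
  set H : ℝ → ℝ := fun x => (Faux β x - Faux (w-1) (1-x)) / (β + w) with hHdef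
  have hmap : Tendsto (fun x : ℝ => 1 - x) (𝓝[>] (0:ℝ)) (𝓝[<] (1:ℝ)) := by
    apply tendsto_nhdsWithin_of_tendsto_nhds_of_eventually_within
    · exact (Continuous.tendsto' (by continuity) 0 1 (by norm_num)).mono_left nhdsWithin_le_nhds
    · filter_upwards [self_mem_nhdsWithin] with x hx
      simp only [Set.mem_Iio]
      have : (0:ℝ) < x := hx
      linarith
  have hmap' : Tendsto (fun x : ℝ => 1 - x) (𝓝[<] (1:ℝ)) (𝓝[>] (0:ℝ)) := by
    apply tendsto_nhdsWithin_of_tendsto_nhds_of_eventually_within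
    · exact (Continuous.tendsto' (by continuity) 1 0 (by norm_num)).mono_left nhdsWithin_le_nhds
    · filter_upwards [self_mem_nhdsWithin] with x hx
      simp only [Set.mem_Ioi]
      have : x < (1:ℝ) := hx
      linarith
  have hderiv : ∀ x ∈ Ioo (0:ℝ) 1, HasDerivAt H (f x) x := by
    intro x hx
    have dlin : HasDerivAt (fun y : ℝ => 1 - y) (-1) x := (hasDerivAt_id x).const_sub 1
    have hx' : (1 - x) ∈ Ioo (0:ℝ) 1 := ⟨by linarith [hx.2], by linarith [hx.1]⟩
    have d2 := (Faux_hasDeriv hw1 hx').comp x dlin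
    have d1 := Faux_hasDeriv hβ hx
    have dH := (d1.sub d2).div_const (β + w)
    refine HasDerivAt.congr_deriv dH (Eq.symm ?_)
    have hst : 0 < Real.sqrt (x*(1-x)) := Real.sqrt_pos.mpr (by nlinarith [hx.1, hx.2])
    have e1 : w - 1 + (1-x) = w - x := by ring
    have e2 : (1-x)*(1-(1-x)) = x*(1-x) := by ring
    simp only [hfdef, e1, e2]
    have hwx : (0:ℝ) < w - x := by linarith [hx.2]
    have hbx : (0:ℝ) < β + x := by linarith [hx.1]
    field_simp
    ring
  have hint : IntervalIntegrable f volume 0 1 := f_intInt β w hβ hw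
  have hla : Tendsto H (𝓝[>] (0:ℝ))
      (𝓝 ((0 - π / Real.sqrt ((w-1)*((w-1)+1))) / (β+w))) :=
    ((Faux_tendsto_zero hβ).sub ((Faux_tendsto_one hw1).comp hmap)).div_const _
  have hlb : Tendsto H (𝓝[<] (1:ℝ))
      (𝓝 ((π / Real.sqrt (β*(β+1)) - 0) / (β+w))) :=
    ((Faux_tendsto_one hβ).sub ((Faux_tendsto_zero hw1).comp hmap')).div_const _
  have hmemI : Ioo (0:ℝ) (1/2) ∈ 𝓝[>] (0:ℝ) := Ioo_mem_nhdsGT_of_mem ⟨le_refl 0, by norm_num⟩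
  have hsub : ∀ᶠ ε in 𝓝[>] (0:ℝ), ∫ x in ε..(1-ε), f x = H (1-ε) - H ε := by
    filter_upwards [hmemI] with ε hε
    apply intervalIntegral.integral_eq_sub_of_hasDerivAt
    · intro x hx
      rw [uIcc_of_le (by linarith [hε.2])] at hx
      exact hderiv x ⟨lt_of_lt_of_le hε.1 hx.1, lt_of_le_of_lt hx.2 (by linarith [hε.1])⟩
    · apply hint.mono_set
      rw [uIcc_of_le (by linarith [hε.2]), uIcc_of_le zero_le_one]
      exact Icc_subset_Icc (le_of_lt hε.1) (by linarith [hε.1])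
  have h1 : Tendsto (fun ε => ∫ x in ε..(1-ε), f x) (𝓝[>] (0:ℝ))
      (𝓝 ((π / Real.sqrt (β*(β+1)) - 0) / (β+w) - (0 - π / Real.sqrt ((w-1)*((w-1)+1))) / (β+w))) :=
    Tendsto.congr' (hsub.mono fun ε h => h.symm) ((hlb.comp hmap).sub hla)
  set P : ℝ → ℝ := fun y => ∫ x in (0:ℝ)..y, f x with hPdef
  have hPicc0 : ContinuousWithinAt P (Icc (0:ℝ) 1) 0 := by
    apply intervalIntegral.continuousWithinAt_primitive (measure_singleton 0)
    simpa using hint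
  have hPicc1 : ContinuousWithinAt P (Icc (0:ℝ) 1) 1 := by
    apply intervalIntegral.continuousWithinAt_primitive (measure_singleton 1)
    simpa using hint
  have hIccmem0 : Icc (0:ℝ) 1 ∈ 𝓝[>] (0:ℝ) :=
    mem_of_superset hmemI (Ioo_subset_Icc_self.trans (Icc_subset_Icc le_rfl (by norm_num)))
  have hIccmem1 : Icc (0:ℝ) 1 ∈ 𝓝[<] (1:ℝ) :=
    mem_of_superset (Ioo_mem_nhdsLT_of_mem ⟨by norm_num, le_refl 1⟩) Ioo_subset_Icc_self
  have hP0 : Tendsto P (𝓝[>] (0:ℝ)) (𝓝 (P 0)) :=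
    hPicc0.tendsto.mono_left (nhdsWithin_le_of_mem hIccmem0)
  have hP1 : Tendsto P (𝓝[<] (1:ℝ)) (𝓝 (P 1)) :=
    hPicc1.tendsto.mono_left (nhdsWithin_le_of_mem hIccmem1)
  have h2pre : ∀ᶠ ε in 𝓝[>] (0:ℝ), ∫ x in ε..(1-ε), f x = P (1-ε) - P ε := by
    filter_upwards [hmemI] with ε hε
    have hi1 : IntervalIntegrable f volume 0 (1-ε) := by
      apply hint.mono_set
      rw [uIcc_of_le (by linarith [hε.2]), uIcc_of_le zero_le_one]
      exact Icc_subset_Icc le_rfl (by linarith [hε.1])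
    have hi2 : IntervalIntegrable f volume 0 ε := by
      apply hint.mono_set
      rw [uIcc_of_le (le_of_lt hε.1), uIcc_of_le zero_le_one]
      exact Icc_subset_Icc le_rfl (by linarith [hε.2])
    exact (intervalIntegral.integral_interval_sub_left hi1 hi2).symm
  have h2 : Tendsto (fun ε => ∫ x in ε..(1-ε), f x) (𝓝[>] (0:ℝ)) (𝓝 (P 1 - P 0)) :=
    Tendsto.congr' (h2pre.mono fun ε h => h.symm) ((hP1.comp hmap).sub hP0)
  have huniq := tendsto_nhds_unique h2 h1
  have hP0z : P 0 = 0 := intervalIntegral.integral_same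
  have hgoal : P 1 = (π / Real.sqrt (β*(β+1)) - 0) / (β+w) - (0 - π / Real.sqrt ((w-1)*((w-1)+1))) / (β+w) := by
    rw [← huniq, hP0z, sub_zero]
  show P 1 = _
  rw [hgoal]
  have hww : (w-1)*((w-1)+1) = w*(w-1) := by ring
  rw [hww]
  have hk1 : 0 < Real.sqrt (β*(β+1)) := Real.sqrt_pos.mpr (by positivity)
  have hk2 : 0 < Real.sqrt (w*(w-1)) := Real.sqrt_pos.mpr (by nlinarith)
  field_simp
  ring
end
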